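/- arXiv:1601.05756 — 5 statements merged into one kernel-verified Lean document; each statement's English description precedes it below -/
import Mathlib

section
/- For every ω ∈ Ω and every t ∈ [0,T] it holds that U(Y_t(ω)) ≤ e^{ct}·U(Y_0(ω)) + ∫_0^t e^{c(t−⌊s⌋)}·R(O_{⌊s⌋}(ω)) ds, where the right-hand side is the Lebesgue integral of the nonnegative step function s ↦ e^{c(t−⌊s⌋)}R(O_{⌊s⌋}(ω)) and the inequality is understood in [0,∞]. (Lemma 2.1 of the paper: a priori bound based on variational arguments.) -/
open MeasureTheory Set

/-- `⌊t⌋_h = max({0, h, −h, 2h, −2h, …} ∩ (−∞, t])` for `h > 0`. -/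
noncomputable def hfloor (h t : ℝ) : ℝ := h * (⌊t / h⌋ : ℝ)

lemma hfloor_nonneg {h : ℝ} (hh : 0 < h) {t : ℝ} (ht : 0 ≤ t) : 0 ≤ hfloor h t :=
  mul_nonneg hh.le (by exact_mod_cast Int.floor_nonneg.2 (div_nonneg ht hh.le))

lemma hfloor_le {h : ℝ} (hh : 0 < h) (t : ℝ) : hfloor h t ≤ t := by
  have h1 : (⌊t / h⌋ : ℝ) ≤ t / h := Int.floor_le _
  have h2 := mul_le_mul_of_nonneg_left h1 hh.le
  simpa [hfloor, mul_div_cancel₀ t hh.ne'] using h2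

lemma hfloor_grid {h : ℝ} (hh : 0 < h) (k : ℕ) {s : ℝ} (h1 : (k : ℝ) * h ≤ s)
    (h2 : s < ((k : ℝ) + 1) * h) : hfloor h s = (k : ℝ) * h := by
  have hfl : ⌊s / h⌋ = (k : ℤ) := by
    rw [Int.floor_eq_iff]
    constructor
    · push_cast
      exact (le_div_iff₀ hh).2 h1
    · push_cast
      exact (div_lt_iff₀ hh).2 (by linarith)
  rw [hfloor, hfl]
  push_cast
  ring

lemma one_step {V W : Type*} [NormedAddCommGroup V] [NormedSpace ℝ V] [CompleteSpace V]
    [NormedAddCommGroup W] [NormedSpace ℝ W]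
    (T h : ℝ) (hh : 0 < h)
    (ι : V →L[ℝ] W) (S : ℝ → ℝ → (W →L[ℝ] V)) (φ : ℝ → W) (y : ℝ → V)
    (hSsemi : ∀ r1 r2 r3 : ℝ, 0 ≤ r1 → r1 < r2 → r2 < r3 → r3 ≤ T →
      S r1 r3 = (S r2 r3).comp (ι.comp (S r1 r2)))
    (hint : ∀ t, 0 < t → t ≤ T →
      IntegrableOn (fun s => S (hfloor h s) t (φ (hfloor h s))) (Ioc 0 t) volume)
    (heq : ∀ t, 0 < t → t ≤ T →
      y t = S 0 t (ι (y 0)) + ∫ s in Ioc (0:ℝ) t, S (hfloor h s) t (φ (hfloor h s)))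
    (k : ℕ) (hkT : ((k : ℝ) + 1) * h ≤ T) :
    ∀ t, (k : ℝ) * h < t → t ≤ ((k : ℝ) + 1) * h →
      y t = S ((k : ℝ) * h) t
        (ι (y ((k : ℝ) * h)) + (t - (k : ℝ) * h) • φ ((k : ℝ) * h)) := by
  intro t ht1 ht2
  have hkh0 : 0 ≤ (k : ℝ) * h := by positivity
  have ht0 : 0 < t := lt_of_le_of_lt hkh0 ht1
  have htT : t ≤ T := ht2.trans hkT
  have hlast : (∫ s in Ioc ((k : ℝ) * h) t, S (hfloor h s) t (φ (hfloor h s)))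
      = (t - (k : ℝ) * h) • S ((k : ℝ) * h) t (φ ((k : ℝ) * h)) := by
    calc (∫ s in Ioc ((k : ℝ) * h) t, S (hfloor h s) t (φ (hfloor h s)))
        = ∫ s in Ioo ((k : ℝ) * h) t, S (hfloor h s) t (φ (hfloor h s)) :=
          (setIntegral_congr_set Ioo_ae_eq_Ioc).symm
      _ = ∫ _ in Ioo ((k : ℝ) * h) t, S ((k : ℝ) * h) t (φ ((k : ℝ) * h)) := by
          refine setIntegral_congr_fun measurableSet_Ioo fun s hs => ?_
          rw [hfloor_grid hh k hs.1.le (lt_of_lt_of_le hs.2 ht2)]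
      _ = (t - (k : ℝ) * h) • S ((k : ℝ) * h) t (φ ((k : ℝ) * h)) := by
          rw [setIntegral_const, measureReal_def, Real.volume_Ioo, ENNReal.toReal_ofReal (by linarith)]
  rcases Nat.eq_zero_or_pos k with hk0 | hk0
  · subst hk0
    simp only [Nat.cast_zero, zero_mul] at ht1 ht2 hlast ⊢
    rw [heq t ht0 htT, hlast]
    simp [map_add, ContinuousLinearMap.map_smul]
  · have hkh : 0 < (k : ℝ) * h := by
      have : (0:ℝ) < (k : ℝ) := by exact_mod_cast hk0
      positivity
    have hkhT : (k : ℝ) * h ≤ T := le_trans (by nlinarith) hkT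
    have hintk := hint ((k : ℝ) * h) hkh hkhT
    have hintt := hint t ht0 htT
    have hsplit : Ioc (0:ℝ) t = Ioc 0 ((k : ℝ) * h) ∪ Ioc ((k : ℝ) * h) t :=
      (Ioc_union_Ioc_eq_Ioc hkh.le ht1.le).symm
    have hfirst : (∫ s in Ioc (0:ℝ) ((k : ℝ) * h), S (hfloor h s) t (φ (hfloor h s)))
        = ((S ((k : ℝ) * h) t).comp ι)
            (∫ s in Ioc (0:ℝ) ((k : ℝ) * h), S (hfloor h s) ((k : ℝ) * h) (φ (hfloor h s))) := by
      calc (∫ s in Ioc (0:ℝ) ((k : ℝ) * h), S (hfloor h s) t (φ (hfloor h s)))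
          = ∫ s in Ioo (0:ℝ) ((k : ℝ) * h), S (hfloor h s) t (φ (hfloor h s)) :=
            (setIntegral_congr_set Ioo_ae_eq_Ioc).symm
        _ = ∫ s in Ioo (0:ℝ) ((k : ℝ) * h),
              ((S ((k : ℝ) * h) t).comp ι) (S (hfloor h s) ((k : ℝ) * h) (φ (hfloor h s))) := by
            refine setIntegral_congr_fun measurableSet_Ioo fun s hs => ?_
            rw [hSsemi (hfloor h s) ((k : ℝ) * h) t (hfloor_nonneg hh hs.1.le)
              (lt_of_le_of_lt (hfloor_le hh s) hs.2) ht1 htT]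
            rfl
        _ = ∫ s in Ioc (0:ℝ) ((k : ℝ) * h),
              ((S ((k : ℝ) * h) t).comp ι) (S (hfloor h s) ((k : ℝ) * h) (φ (hfloor h s))) :=
            setIntegral_congr_set Ioo_ae_eq_Ioc
        _ = ((S ((k : ℝ) * h) t).comp ι)
              (∫ s in Ioc (0:ℝ) ((k : ℝ) * h), S (hfloor h s) ((k : ℝ) * h) (φ (hfloor h s))) :=
            ContinuousLinearMap.integral_comp_comm _ hintk
    rw [heq t ht0 htT, hsplit,
      setIntegral_union (Ioc_disjoint_Ioc_of_le le_rfl) measurableSet_Ioc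
        (hintt.mono_set (by rw [hsplit]; exact subset_union_left))
        (hintt.mono_set (by rw [hsplit]; exact subset_union_right)),
      hfirst, hlast, heq ((k : ℝ) * h) hkh hkhT,
      hSsemi 0 ((k : ℝ) * h) t le_rfl hkh ht1 htT]
    simp only [ContinuousLinearMap.comp_apply, map_add, ContinuousLinearMap.map_smul]
    abel

lemma apriori_aux (h c : ℝ) (hh : 0 < h) (M : ℕ)
    (u ρ : ℝ → ℝ) (hu0 : ∀ t, 0 ≤ u t) (hρ0 : ∀ r, 0 ≤ ρ r)
    (hstep : ∀ k : ℕ, k < M → ∀ t, (k : ℝ) * h < t → t ≤ ((k : ℝ) + 1) * h →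
      u t ≤ Real.exp (c * (t - (k : ℝ) * h)) *
        (u ((k : ℝ) * h) + (t - (k : ℝ) * h) * ρ ((k : ℝ) * h))) :
    ∀ k : ℕ, k ≤ M → ∀ t, 0 < t → t ≤ (k : ℝ) * h →
      ENNReal.ofReal (u t) ≤ ENNReal.ofReal (Real.exp (c * t) * u 0) +
        ∫⁻ s in Ioc (0:ℝ) t,
          ENNReal.ofReal (Real.exp (c * (t - hfloor h s)) * ρ (hfloor h s)) := by
  intro k
  induction k with
  | zero =>
    intro _ t h1 h2
    simp only [Nat.cast_zero, zero_mul] at h2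
    linarith
  | succ k ih =>
    intro hkM t h1 h2
    rcases le_or_gt t ((k : ℝ) * h) with hle | hlt
    · exact ih (Nat.le_of_succ_le hkM) t h1 hle
    · have hk : k < M := hkM
      have h2' : t ≤ ((k : ℝ) + 1) * h := by push_cast at h2; linarith
      have hB := hstep k hk t hlt h2'
      have hts : (0:ℝ) ≤ t - (k : ℝ) * h := by linarith
      have hgrid : ENNReal.ofReal (u ((k : ℝ) * h)) ≤
          ENNReal.ofReal (Real.exp (c * ((k : ℝ) * h)) * u 0) +
          ∫⁻ s in Ioc (0:ℝ) ((k : ℝ) * h),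
            ENNReal.ofReal (Real.exp (c * ((k : ℝ) * h - hfloor h s)) * ρ (hfloor h s)) := by
        rcases Nat.eq_zero_or_pos k with hk0 | hk0
        · subst hk0; simp
        · exact ih hk.le ((k : ℝ) * h)
            (mul_pos (by exact_mod_cast hk0) hh) le_rfl
      have htail : (∫⁻ s in Ioc ((k : ℝ) * h) t,
            ENNReal.ofReal (Real.exp (c * (t - hfloor h s)) * ρ (hfloor h s)))
          = ENNReal.ofReal (Real.exp (c * (t - (k : ℝ) * h))) *
              ENNReal.ofReal ((t - (k : ℝ) * h) * ρ ((k : ℝ) * h)) := by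
        calc (∫⁻ s in Ioc ((k : ℝ) * h) t,
              ENNReal.ofReal (Real.exp (c * (t - hfloor h s)) * ρ (hfloor h s)))
            = ∫⁻ s in Ioo ((k : ℝ) * h) t,
              ENNReal.ofReal (Real.exp (c * (t - hfloor h s)) * ρ (hfloor h s)) :=
              (setLIntegral_congr Ioo_ae_eq_Ioc).symm
          _ = ∫⁻ _ in Ioo ((k : ℝ) * h) t,
              ENNReal.ofReal (Real.exp (c * (t - (k : ℝ) * h)) * ρ ((k : ℝ) * h)) := by
              refine setLIntegral_congr_fun measurableSet_Ioo
                (fun s hs => ?_)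
              rw [hfloor_grid hh k hs.1.le (lt_of_lt_of_le hs.2 h2')]
          _ = ENNReal.ofReal (Real.exp (c * (t - (k : ℝ) * h))) *
              ENNReal.ofReal ((t - (k : ℝ) * h) * ρ ((k : ℝ) * h)) := by
              rw [setLIntegral_const, Real.volume_Ioo,
                ENNReal.ofReal_mul (Real.exp_nonneg _), ENNReal.ofReal_mul hts]
              ring
      have e2 : ENNReal.ofReal (Real.exp (c * (t - (k : ℝ) * h))) *
          ENNReal.ofReal (Real.exp (c * ((k : ℝ) * h)) * u 0)
          = ENNReal.ofReal (Real.exp (c * t) * u 0) := by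
        rw [← ENNReal.ofReal_mul (Real.exp_nonneg _), ← mul_assoc, ← Real.exp_add]
        have harg : c * (t - (k : ℝ) * h) + c * ((k : ℝ) * h) = c * t := by ring
        rw [harg]
      have e3 : ENNReal.ofReal (Real.exp (c * (t - (k : ℝ) * h))) *
          (∫⁻ s in Ioc (0:ℝ) ((k : ℝ) * h),
            ENNReal.ofReal (Real.exp (c * ((k : ℝ) * h - hfloor h s)) * ρ (hfloor h s)))
          = ∫⁻ s in Ioc (0:ℝ) ((k : ℝ) * h),
            ENNReal.ofReal (Real.exp (c * (t - hfloor h s)) * ρ (hfloor h s)) := by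
        rw [← lintegral_const_mul' _ _ ENNReal.ofReal_ne_top]
        refine lintegral_congr fun s => ?_
        rw [← ENNReal.ofReal_mul (Real.exp_nonneg _), ← mul_assoc, ← Real.exp_add]
        have harg : c * (t - (k : ℝ) * h) + c * ((k : ℝ) * h - hfloor h s)
            = c * (t - hfloor h s) := by ring
        rw [harg]
      have e5 : (∫⁻ s in Ioc (0:ℝ) ((k : ℝ) * h),
            ENNReal.ofReal (Real.exp (c * (t - hfloor h s)) * ρ (hfloor h s)))
          + (∫⁻ s in Ioc ((k : ℝ) * h) t,
            ENNReal.ofReal (Real.exp (c * (t - hfloor h s)) * ρ (hfloor h s)))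
          = ∫⁻ s in Ioc (0:ℝ) t,
            ENNReal.ofReal (Real.exp (c * (t - hfloor h s)) * ρ (hfloor h s)) := by
        rw [← lintegral_union measurableSet_Ioc (Ioc_disjoint_Ioc_of_le le_rfl),
          Ioc_union_Ioc_eq_Ioc (by positivity) hlt.le]
      calc ENNReal.ofReal (u t)
          ≤ ENNReal.ofReal (Real.exp (c * (t - (k : ℝ) * h)) *
              (u ((k : ℝ) * h) + (t - (k : ℝ) * h) * ρ ((k : ℝ) * h))) :=
            ENNReal.ofReal_le_ofReal hB
        _ = ENNReal.ofReal (Real.exp (c * (t - (k : ℝ) * h))) *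
              (ENNReal.ofReal (u ((k : ℝ) * h)) +
               ENNReal.ofReal ((t - (k : ℝ) * h) * ρ ((k : ℝ) * h))) := by
            rw [ENNReal.ofReal_mul (Real.exp_nonneg _),
              ENNReal.ofReal_add (hu0 _) (mul_nonneg hts (hρ0 _))]
        _ ≤ ENNReal.ofReal (Real.exp (c * (t - (k : ℝ) * h))) *
              ((ENNReal.ofReal (Real.exp (c * ((k : ℝ) * h)) * u 0) +
                ∫⁻ s in Ioc (0:ℝ) ((k : ℝ) * h),
                  ENNReal.ofReal (Real.exp (c * ((k : ℝ) * h - hfloor h s)) * ρ (hfloor h s))) +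
               ENNReal.ofReal ((t - (k : ℝ) * h) * ρ ((k : ℝ) * h))) :=
            by gcongr
        _ = ENNReal.ofReal (Real.exp (c * (t - (k : ℝ) * h))) *
              ENNReal.ofReal (Real.exp (c * ((k : ℝ) * h)) * u 0) +
            (ENNReal.ofReal (Real.exp (c * (t - (k : ℝ) * h))) *
              (∫⁻ s in Ioc (0:ℝ) ((k : ℝ) * h),
                ENNReal.ofReal (Real.exp (c * ((k : ℝ) * h - hfloor h s)) * ρ (hfloor h s))) +
             ENNReal.ofReal (Real.exp (c * (t - (k : ℝ) * h))) *
              ENNReal.ofReal ((t - (k : ℝ) * h) * ρ ((k : ℝ) * h))) := by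
            ring
        _ = ENNReal.ofReal (Real.exp (c * t) * u 0) +
            ((∫⁻ s in Ioc (0:ℝ) ((k : ℝ) * h),
                ENNReal.ofReal (Real.exp (c * (t - hfloor h s)) * ρ (hfloor h s))) +
             (∫⁻ s in Ioc ((k : ℝ) * h) t,
                ENNReal.ofReal (Real.exp (c * (t - hfloor h s)) * ρ (hfloor h s)))) := by
            rw [e2, e3, htail]
        _ = ENNReal.ofReal (Real.exp (c * t) * u 0) +
            ∫⁻ s in Ioc (0:ℝ) t,
              ENNReal.ofReal (Real.exp (c * (t - hfloor h s)) * ρ (hfloor h s)) := by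
            rw [e5]

theorem stmt0
    (T q c C : ℝ) (hT : 0 < T) (hq : 0 < q) (hc : 0 ≤ c) (hC : 0 ≤ C)
    (M : ℕ) (hM : 0 < M)
    {V W : Type*}
    [NormedAddCommGroup V] [NormedSpace ℝ V] [CompleteSpace V]
    [TopologicalSpace.SeparableSpace V] [MeasurableSpace V] [BorelSpace V]
    [NormedAddCommGroup W] [NormedSpace ℝ W] [CompleteSpace W]
    [TopologicalSpace.SeparableSpace W] [MeasurableSpace W] [BorelSpace W]
    (ι : V →L[ℝ] W) (hι_inj : Function.Injective ι) (hι_dense : DenseRange ι)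
    (U R Vm : V → ℝ)
    (hU0 : ∀ v, 0 ≤ U v) (hR0 : ∀ v, 0 ≤ R v) (hVm0 : ∀ v, 0 ≤ Vm v)
    (hUm : Measurable U) (hRm : Measurable R) (hVmm : Measurable Vm)
    (F : V → W) (hFm : Measurable F)
    (S : ℝ → ℝ → (W →L[ℝ] V))
    (hSm : ∀ w : W, Measurable fun p : ℝ × ℝ => S p.1 p.2 w)
    (hFgrowth : ∀ u v : V, ‖F (u + v)‖ ≤ C * (1 + U u ^ q + U v ^ q))
    (hSsemi : ∀ r1 r2 r3 : ℝ, 0 ≤ r1 → r1 < r2 → r2 < r3 → r3 ≤ T →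
      S r1 r3 = (S r2 r3).comp (ι.comp (S r1 r2)))
    (hLyap : ∀ u v : V, ∀ k : ℕ, k < M → ∀ t : ℝ,
      (k : ℝ) * T / M < t → t ≤ ((k : ℝ) + 1) * T / M →
      U (S ((k : ℝ) * T / M) t
          (ι u + (t - (k : ℝ) * T / M) •
            (if Vm (u + v) ≤ (M : ℝ) / T then F (u + v) else 0)))
        ≤ Real.exp (c * (t - (k : ℝ) * T / M)) * (U u + (t - (k : ℝ) * T / M) * R v))
    {Ω : Type*} [MeasurableSpace Ω] (P : Measure Ω) [IsProbabilityMeasure P]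
    (O Y : ℝ → Ω → V)
    (hYint : ∀ ω : Ω, ∀ t : ℝ, 0 < t → t ≤ T →
      IntegrableOn
        (fun s => S (hfloor (T / M) s) t
          (if Vm (Y (hfloor (T / M) s) ω + O (hfloor (T / M) s) ω) ≤ (M : ℝ) / T
            then F (Y (hfloor (T / M) s) ω + O (hfloor (T / M) s) ω) else 0))
        (Set.Ioc 0 t))
    (hYeq : ∀ ω : Ω, ∀ t : ℝ, 0 < t → t ≤ T →
      Y t ω = S 0 t (ι (Y 0 ω)) +
        ∫ s in Set.Ioc (0 : ℝ) t, S (hfloor (T / M) s) t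
          (if Vm (Y (hfloor (T / M) s) ω + O (hfloor (T / M) s) ω) ≤ (M : ℝ) / T
            then F (Y (hfloor (T / M) s) ω + O (hfloor (T / M) s) ω) else 0)) :
    ∀ ω : Ω, ∀ t ∈ Set.Icc (0 : ℝ) T,
      ENNReal.ofReal (U (Y t ω)) ≤
        ENNReal.ofReal (Real.exp (c * t) * U (Y 0 ω)) +
          ∫⁻ s in Set.Ioc (0 : ℝ) t,
            ENNReal.ofReal
              (Real.exp (c * (t - hfloor (T / M) s)) * R (O (hfloor (T / M) s) ω)) := by
  intro ω t ht
  have hM0 : (0:ℝ) < (M : ℝ) := by exact_mod_cast hM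
  have hh : (0:ℝ) < T / M := div_pos hT hM0
  have hMT : (M : ℝ) * (T / M) = T := by field_simp
  rcases eq_or_lt_of_le ht.1 with h0 | h0
  · subst h0
    simp
  · have hstep : ∀ k : ℕ, k < M → ∀ t', (k : ℝ) * (T / M) < t' → t' ≤ ((k : ℝ) + 1) * (T / M) →
        U (Y t' ω) ≤ Real.exp (c * (t' - (k : ℝ) * (T / M))) *
          (U (Y ((k : ℝ) * (T / M)) ω) +
            (t' - (k : ℝ) * (T / M)) * R (O ((k : ℝ) * (T / M)) ω)) := by
      intro k hk t' h1 h2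
      have hkT : ((k : ℝ) + 1) * (T / M) ≤ T := by
        have hkM : (k : ℝ) + 1 ≤ (M : ℝ) := by exact_mod_cast Nat.succ_le_of_lt hk
        calc ((k : ℝ) + 1) * (T / M) ≤ (M : ℝ) * (T / M) :=
              mul_le_mul_of_nonneg_right hkM hh.le
          _ = T := hMT
      have hrep := one_step T (T / M) hh ι S
        (fun r => if Vm (Y r ω + O r ω) ≤ (M : ℝ) / T then F (Y r ω + O r ω) else 0)
        (fun s => Y s ω) hSsemi (fun t h1 h2 => hYint ω t h1 h2)
        (fun t h1 h2 => hYeq ω t h1 h2) k hkT t' h1 h2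
      have hL := hLyap (Y ((k : ℝ) * (T / M)) ω) (O ((k : ℝ) * (T / M)) ω) k hk t'
        (by rw [mul_div_assoc]; exact h1) (by rw [mul_div_assoc]; exact h2)
      rw [mul_div_assoc] at hL
      rw [hrep]
      exact hL
    have := apriori_aux (T / M) c hh M (fun s => U (Y s ω)) (fun r => R (O r ω))
      (fun s => hU0 _) (fun r => hR0 _) hstep M le_rfl t h0 (by rw [hMT]; exact ht.2)
    exact this
end

section
/- For every ω ∈ Ω, every t ∈ (0,T] and every σ ∈ [0,1) it holds that ‖Y_t(ω)‖_V ≤ ‖S_{0,t}‖_{L(V)}·‖Y_0(ω)‖_V + C·( sup_{s∈[0,t)} (t−s)^σ ‖S_{⌊s⌋,t}‖_{L(W,V)} )·( ∫_0^t (t−s)^{−σ} (U(O_{⌊s⌋}(ω)))^q ds + (t^{1−σ}/(1−σ))·( 1 + 2^{max{q−1,0}} e^{cqt} ( (U(Y_0(ω)))^q + (∫_0^t R(O_{⌊u⌋}(ω)) du)^q ) ) ), where ‖S_{0,t}‖_{L(V)} denotes the operator norm of v ↦ S_{0,t}(v) as a map from V to V, and where the supremum and the integrals of nonnegative integrands take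 values in [0,∞] and the inequality is understood in [0,∞]. (Corollary 2.3 of the paper: a priori bound based on bootstrap-type arguments.) -/
open MeasureTheory Set

namespace Stmt2Aux

lemma hfloor_grid {h : ℝ} (hh : 0 < h) (k : ℕ) : hfloor h ((k : ℝ) * h) = (k : ℝ) * h := by
  unfold hfloor
  rw [mul_div_cancel_right₀ _ hh.ne', Int.floor_natCast]
  push_cast
  ring

lemma hfloor_eq_of_mem {h : ℝ} (hh : 0 < h) (k : ℕ) {s : ℝ}
    (h1 : (k : ℝ) * h ≤ s) (h2 : s < ((k : ℝ) + 1) * h) : hfloor h s = (k : ℝ) * h := by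
  unfold hfloor
  have hfl : ⌊s / h⌋ = (k : ℤ) := by
    rw [Int.floor_eq_iff]
    constructor
    · rw [Int.cast_natCast, le_div_iff₀ hh]; linarith
    · rw [Int.cast_natCast, div_lt_iff₀ hh]; linarith
  rw [hfl]
  push_cast
  ring

lemma hfloor_le {h : ℝ} (hh : 0 < h) (s : ℝ) : hfloor h s ≤ s := by
  unfold hfloor
  have h1 : (⌊s / h⌋ : ℝ) ≤ s / h := Int.floor_le _
  calc h * (⌊s / h⌋ : ℝ) ≤ h * (s / h) := by nlinarith
  _ = s := by field_simp

lemma hfloor_nonneg {h : ℝ} (hh : 0 < h) {s : ℝ} (hs : 0 ≤ s) : 0 ≤ hfloor h s := by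
  unfold hfloor
  have : (0 : ℤ) ≤ ⌊s / h⌋ := Int.floor_nonneg.mpr (div_nonneg hs hh.le)
  have : (0 : ℝ) ≤ (⌊s / h⌋ : ℝ) := by exact_mod_cast this
  positivity

lemma measurable_comp_hfloor {α : Type*} [MeasurableSpace α] (h : ℝ) (f : ℝ → α) :
    Measurable fun s => f (hfloor h s) := by
  have h1 : Measurable fun s : ℝ => ⌊s / h⌋ :=
    Int.measurable_floor.comp (measurable_id.div_const h)
  exact (measurable_of_countable (fun n : ℤ => f (h * n))).comp h1

lemma sum_eq_lintegral {h : ℝ} (hh : 0 < h) (ρ : ℝ → ENNReal) (k : ℕ) :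
    ∑ j ∈ Finset.range k, ENNReal.ofReal h * ρ ((j : ℝ) * h) =
      ∫⁻ u in Set.Ioc 0 ((k : ℝ) * h), ρ (hfloor h u) := by
  induction k with
  | zero => simp
  | succ k ih =>
    have hcast : ((k + 1 : ℕ) : ℝ) = (k : ℝ) + 1 := by push_cast; ring
    have hle1 : (0 : ℝ) ≤ (k : ℝ) * h := by positivity
    have hle2 : (k : ℝ) * h ≤ ((k : ℝ) + 1) * h := by nlinarith
    have hseg : ∫⁻ u in Set.Ioc ((k : ℝ) * h) (((k : ℝ) + 1) * h), ρ (hfloor h u)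
        = ENNReal.ofReal h * ρ ((k : ℝ) * h) := by
      rw [← setLIntegral_congr (Ioo_ae_eq_Ioc (a := (k : ℝ) * h) (b := ((k : ℝ) + 1) * h))]
      rw [setLIntegral_congr_fun_ae measurableSet_Ioo
        (ae_of_all _ (fun u hu => by rw [hfloor_eq_of_mem hh k hu.1.le hu.2]) :
          ∀ᵐ u ∂volume, u ∈ Set.Ioo ((k : ℝ) * h) (((k : ℝ) + 1) * h) →
            ρ (hfloor h u) = (fun _ => ρ ((k : ℝ) * h)) u)]
      rw [setLIntegral_const, Real.volume_Ioo]
      rw [mul_comm]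
      congr 1
      ring
    rw [Finset.sum_range_succ, ih, hcast]
    rw [← Ioc_union_Ioc_eq_Ioc hle1 hle2, lintegral_union measurableSet_Ioc (Ioc_disjoint_Ioc_of_le le_rfl),
      hseg]

lemma gronwall {c h : ℝ} (hc : 0 ≤ c) (hh : 0 ≤ h) (φ ρ : ℕ → ℝ)
    (hρ : ∀ j, 0 ≤ ρ j) (M : ℕ)
    (hstep : ∀ k, k < M → φ (k + 1) ≤ Real.exp (c * h) * (φ k + h * ρ k)) :
    ∀ k, k ≤ M →
      φ k ≤ Real.exp (c * ((k : ℝ) * h)) * (φ 0 + ∑ j ∈ Finset.range k, h * ρ j) := by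
  intro k
  induction k with
  | zero => intro _; simp
  | succ k ih =>
    intro hkM
    have hk : k < M := lt_of_lt_of_le (Nat.lt_succ_self k) hkM
    have h2 := ih hk.le
    have e1 : Real.exp (c * h) * Real.exp (c * ((k : ℝ) * h))
        = Real.exp (c * (((k : ℕ) + 1 : ℝ) * h)) := by
      rw [← Real.exp_add]; ring_nf
    have e2 : Real.exp (c * h) ≤ Real.exp (c * (((k : ℕ) + 1 : ℝ) * h)) := by
      apply Real.exp_le_exp.mpr
      have h4 : (0 : ℝ) ≤ c * ((k : ℝ) * h) := by positivity
      nlinarith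
    have hcast : ((k + 1 : ℕ) : ℝ) = (k : ℝ) + 1 := by push_cast; ring
    calc φ (k + 1) ≤ Real.exp (c * h) * (φ k + h * ρ k) := hstep k hk
    _ ≤ Real.exp (c * h) * (Real.exp (c * ((k : ℝ) * h)) *
          (φ 0 + ∑ j ∈ Finset.range k, h * ρ j) + h * ρ k) := by
        have := Real.exp_pos (c * h)
        nlinarith
    _ ≤ Real.exp (c * (((k + 1 : ℕ) : ℝ) * h)) *
          (φ 0 + ∑ j ∈ Finset.range (k + 1), h * ρ j) := by
        rw [Finset.sum_range_succ, hcast, mul_add, ← mul_assoc, e1]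
        have h3 : Real.exp (c * h) * (h * ρ k) ≤
            Real.exp (c * (((k : ℝ) + 1) * h)) * (h * ρ k) := by
          apply mul_le_mul_of_nonneg_right _ (mul_nonneg hh (hρ k))
          exact e2
        nlinarith [h3]

lemma rep {T h : ℝ} (hh : 0 < h)
    {V W : Type*} [NormedAddCommGroup V] [NormedSpace ℝ V] [CompleteSpace V]
    [NormedAddCommGroup W] [NormedSpace ℝ W]
    (ι : V →L[ℝ] W) (S : ℝ → ℝ → (W →L[ℝ] V))
    (hSsemi : ∀ r1 r2 r3 : ℝ, 0 ≤ r1 → r1 < r2 → r2 < r3 → r3 ≤ T →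
      S r1 r3 = (S r2 r3).comp (ι.comp (S r1 r2)))
    (g : ℝ → W) (y : ℝ → V)
    (hy : ∀ τ : ℝ, 0 < τ → τ ≤ T →
      y τ = S 0 τ (ι (y 0)) + ∫ s in Set.Ioc (0:ℝ) τ, S (hfloor h s) τ (g (hfloor h s)))
    (hint : ∀ τ : ℝ, 0 < τ → τ ≤ T →
      IntegrableOn (fun s => S (hfloor h s) τ (g (hfloor h s))) (Set.Ioc 0 τ))
    (k : ℕ) (τ : ℝ) (h1 : (k:ℝ) * h < τ) (h2 : τ ≤ ((k:ℝ) + 1) * h) (h3 : τ ≤ T) :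
    y τ = S ((k:ℝ)*h) τ (ι (y ((k:ℝ)*h)) + (τ - (k:ℝ)*h) • g ((k:ℝ)*h)) := by
  have hτ0 : 0 < τ := lt_of_le_of_lt (by positivity) h1
  have hconst : ∫ s in Set.Ioc ((k:ℝ)*h) τ, S (hfloor h s) τ (g (hfloor h s))
      = (τ - (k:ℝ)*h) • S ((k:ℝ)*h) τ (g ((k:ℝ)*h)) := by
    have hne : ∀ᵐ s : ℝ, s ≠ ((k:ℝ) + 1) * h := by
      rw [ae_iff]
      simpa using measure_singleton (((k:ℝ) + 1) * h)
    have hcg : ∀ᵐ s : ℝ, s ∈ Set.Ioc ((k:ℝ)*h) τ →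
        S (hfloor h s) τ (g (hfloor h s)) = (fun _ => S ((k:ℝ)*h) τ (g ((k:ℝ)*h))) s := by
      filter_upwards [hne] with s hs hmem
      have hlt : s < ((k:ℝ) + 1) * h := lt_of_le_of_ne (le_trans hmem.2 h2) hs
      rw [hfloor_eq_of_mem hh k hmem.1.le hlt]
    rw [setIntegral_congr_ae measurableSet_Ioc hcg, setIntegral_const, Real.volume_real_Ioc_of_le h1.le]
  rcases Nat.eq_zero_or_pos k with hk0 | hkpos
  · subst hk0
    simp only [Nat.cast_zero, zero_mul] at hconst h1 ⊢
    rw [hy τ hτ0 h3, hconst, map_add, _root_.map_smul, sub_zero]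
  · have hk0 : (0:ℝ) < (k:ℝ) := by exact_mod_cast hkpos
    have ha0 : 0 < (k:ℝ)*h := by positivity
    have haT : (k:ℝ)*h ≤ T := le_trans h1.le h3
    have hi := hint τ hτ0 h3
    have hsplit : ∫ s in Set.Ioc (0:ℝ) τ, S (hfloor h s) τ (g (hfloor h s))
        = (∫ s in Set.Ioc (0:ℝ) ((k:ℝ)*h), S (hfloor h s) τ (g (hfloor h s)))
          + ∫ s in Set.Ioc ((k:ℝ)*h) τ, S (hfloor h s) τ (g (hfloor h s)) := by
      rw [← setIntegral_union (Ioc_disjoint_Ioc_of_le le_rfl) measurableSet_Ioc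
          (hi.mono_set (Ioc_subset_Ioc_right h1.le))
          (hi.mono_set (Ioc_subset_Ioc_left ha0.le)),
        Ioc_union_Ioc_eq_Ioc ha0.le h1.le]
    have hae : ∀ᵐ s : ℝ, s ∈ Set.Ioc (0:ℝ) ((k:ℝ)*h) →
        S (hfloor h s) τ (g (hfloor h s))
          = (fun s => ((S ((k:ℝ)*h) τ).comp ι) (S (hfloor h s) ((k:ℝ)*h) (g (hfloor h s)))) s := by
      have hne : ∀ᵐ s : ℝ, s ≠ (k:ℝ) * h := by
        rw [ae_iff]
        simpa using measure_singleton ((k:ℝ) * h)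
      filter_upwards [hne] with s hs hmem
      have hlt : hfloor h s < (k:ℝ)*h :=
        lt_of_le_of_lt (hfloor_le hh s) (lt_of_le_of_ne hmem.2 hs)
      have h0' : 0 ≤ hfloor h s := hfloor_nonneg hh hmem.1.le
      rw [hSsemi (hfloor h s) ((k:ℝ)*h) τ h0' hlt h1 h3]
      rfl
    have hpull : ∫ s in Set.Ioc (0:ℝ) ((k:ℝ)*h), S (hfloor h s) τ (g (hfloor h s))
        = S ((k:ℝ)*h) τ (ι (∫ s in Set.Ioc (0:ℝ) ((k:ℝ)*h),
            S (hfloor h s) ((k:ℝ)*h) (g (hfloor h s)))) := by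
      rw [setIntegral_congr_ae measurableSet_Ioc hae,
        ContinuousLinearMap.integral_comp_comm _ (hint ((k:ℝ)*h) ha0 haT)]
      rfl
    rw [hy τ hτ0 h3, hsplit, hconst, hpull, hy ((k:ℝ)*h) ha0 haT,
      hSsemi 0 ((k:ℝ)*h) τ le_rfl ha0 h1 h3]
    simp only [ContinuousLinearMap.comp_apply, map_add, _root_.map_smul]
    abel

end Stmt2Aux

open scoped ENNReal

theorem stmt2
    (T q c C : ℝ) (hT : 0 < T) (hq : 0 < q) (hc : 0 ≤ c) (hC : 0 ≤ C)
    (M : ℕ) (hM : 0 < M)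
    {V W : Type*}
    [NormedAddCommGroup V] [NormedSpace ℝ V] [CompleteSpace V]
    [TopologicalSpace.SeparableSpace V] [MeasurableSpace V] [BorelSpace V]
    [NormedAddCommGroup W] [NormedSpace ℝ W] [CompleteSpace W]
    [TopologicalSpace.SeparableSpace W] [MeasurableSpace W] [BorelSpace W]
    (ι : V →L[ℝ] W) (hι_inj : Function.Injective ι) (hι_dense : DenseRange ι)
    (U R Vm : V → ℝ)
    (hU0 : ∀ v, 0 ≤ U v) (hR0 : ∀ v, 0 ≤ R v) (hVm0 : ∀ v, 0 ≤ Vm v)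
    (hUm : Measurable U) (hRm : Measurable R) (hVmm : Measurable Vm)
    (F : V → W) (hFm : Measurable F)
    (S : ℝ → ℝ → (W →L[ℝ] V))
    (hSm : ∀ w : W, Measurable fun p : ℝ × ℝ => S p.1 p.2 w)
    (hFgrowth : ∀ u v : V, ‖F (u + v)‖ ≤ C * (1 + U u ^ q + U v ^ q))
    (hSsemi : ∀ r1 r2 r3 : ℝ, 0 ≤ r1 → r1 < r2 → r2 < r3 → r3 ≤ T →
      S r1 r3 = (S r2 r3).comp (ι.comp (S r1 r2)))
    (hLyap : ∀ u v : V, ∀ k : ℕ, k < M → ∀ t : ℝ,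
      (k : ℝ) * T / M < t → t ≤ ((k : ℝ) + 1) * T / M →
      U (S ((k : ℝ) * T / M) t
          (ι u + (t - (k : ℝ) * T / M) •
            (if Vm (u + v) ≤ (M : ℝ) / T then F (u + v) else 0)))
        ≤ Real.exp (c * (t - (k : ℝ) * T / M)) * (U u + (t - (k : ℝ) * T / M) * R v))
    {Ω : Type*} [MeasurableSpace Ω] (P : Measure Ω) [IsProbabilityMeasure P]
    (O Y : ℝ → Ω → V)
    (hYint : ∀ ω : Ω, ∀ t : ℝ, 0 < t → t ≤ T →
      IntegrableOn
        (fun s => S (hfloor (T / M) s) t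
          (if Vm (Y (hfloor (T / M) s) ω + O (hfloor (T / M) s) ω) ≤ (M : ℝ) / T
            then F (Y (hfloor (T / M) s) ω + O (hfloor (T / M) s) ω) else 0))
        (Set.Ioc 0 t))
    (hYeq : ∀ ω : Ω, ∀ t : ℝ, 0 < t → t ≤ T →
      Y t ω = S 0 t (ι (Y 0 ω)) +
        ∫ s in Set.Ioc (0 : ℝ) t, S (hfloor (T / M) s) t
          (if Vm (Y (hfloor (T / M) s) ω + O (hfloor (T / M) s) ω) ≤ (M : ℝ) / T
            then F (Y (hfloor (T / M) s) ω + O (hfloor (T / M) s) ω) else 0)) :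
    ∀ ω : Ω, ∀ t : ℝ, 0 < t → t ≤ T → ∀ σ : ℝ, σ ∈ Set.Ico (0 : ℝ) 1 →
      ENNReal.ofReal ‖Y t ω‖ ≤
        ENNReal.ofReal (‖(S 0 t).comp ι‖ * ‖Y 0 ω‖) +
          ENNReal.ofReal C *
            (⨆ s ∈ Set.Ico (0 : ℝ) t,
              ENNReal.ofReal ((t - s) ^ σ * ‖S (hfloor (T / M) s) t‖)) *
            ((∫⁻ s in Set.Ioc (0 : ℝ) t,
                ENNReal.ofReal ((t - s) ^ (-σ) * U (O (hfloor (T / M) s) ω) ^ q)) +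
              ENNReal.ofReal (t ^ (1 - σ) / (1 - σ)) *
                (1 + ENNReal.ofReal (2 ^ max (q - 1) 0 * Real.exp (c * q * t)) *
                  (ENNReal.ofReal (U (Y 0 ω) ^ q) +
                    (∫⁻ u in Set.Ioc (0 : ℝ) t,
                      ENNReal.ofReal (R (O (hfloor (T / M) u) ω))) ^ q))) := by
  intro ω t ht htT σ hσ
  obtain ⟨hσ0, hσ1⟩ := hσ
  have hM0 : (0:ℝ) < (M:ℝ) := Nat.cast_pos.mpr hM
  set h : ℝ := T / M with hhdef
  have hh : 0 < h := div_pos hT hM0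
  have hMh : (M:ℝ) * h = T := by rw [hhdef]; field_simp [hM0.ne']
  set In : ℝ≥0∞ := ∫⁻ u in Set.Ioc (0:ℝ) t, ENNReal.ofReal (R (O (hfloor h u) ω)) with hIdef
  set K : ℝ≥0∞ := ⨆ s ∈ Set.Ico (0:ℝ) t,
      ENNReal.ofReal ((t - s) ^ σ * ‖S (hfloor h s) t‖) with hKdef
  set Jd : ℝ≥0∞ := ∫⁻ s in Set.Ioc (0:ℝ) t,
      ENNReal.ofReal ((t - s) ^ (-σ) * U (O (hfloor h s) ω) ^ q) with hJdef
  set Eb : ℝ≥0∞ := ENNReal.ofReal (2 ^ max (q - 1) 0 * Real.exp (c * q * t)) *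
      (ENNReal.ofReal (U (Y 0 ω) ^ q) + In ^ q) with hEdef
  -- representation at grid steps
  have hrep := Stmt2Aux.rep (T := T) hh ι S hSsemi
      (fun x => if Vm (Y x ω + O x ω) ≤ (M:ℝ)/T then F (Y x ω + O x ω) else 0)
      (fun τ => Y τ ω) (fun τ h1 h2 => hYeq ω τ h1 h2) (fun τ h1 h2 => hYint ω τ h1 h2)
  -- one-step Lyapunov estimate
  have hstepU : ∀ k : ℕ, k < M →
      U (Y (((k:ℝ) + 1) * h) ω) ≤
        Real.exp (c * h) * (U (Y ((k:ℝ) * h) ω) + h * R (O ((k:ℝ) * h) ω)) := by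
    intro k hk
    have hτ1 : (k:ℝ) * h < ((k:ℝ) + 1) * h := by nlinarith
    have hkM' : (k:ℝ) + 1 ≤ (M:ℝ) := by exact_mod_cast hk
    have hτ3 : ((k:ℝ) + 1) * h ≤ T := by nlinarith [hMh]
    have hr := hrep k (((k:ℝ) + 1) * h) hτ1 le_rfl hτ3
    beta_reduce at hr
    have he : (k:ℝ) * T / (M:ℝ) = (k:ℝ) * h := by rw [mul_div_assoc, ← hhdef]
    have he' : ((k:ℝ) + 1) * T / (M:ℝ) = ((k:ℝ) + 1) * h := by rw [mul_div_assoc, ← hhdef]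
    have hL := hLyap (Y ((k:ℝ) * h) ω) (O ((k:ℝ) * h) ω) k hk (((k:ℝ) + 1) * h)
      (by rw [he]; exact hτ1) (by rw [he'])
    rw [he] at hL
    have hsub : ((k:ℝ) + 1) * h - (k:ℝ) * h = h := by ring
    rw [hsub] at hL
    rw [hr, hsub]
    exact hL
  -- discrete Gronwall estimate at grid points
  have hgrid := Stmt2Aux.gronwall hc hh.le (fun k => U (Y ((k:ℝ) * h) ω))
      (fun k => R (O ((k:ℝ) * h) ω)) (fun j => hR0 _) M
      (fun k hk => by
        have := hstepU k hk
        have hcast : ((k:ℝ) + 1) = ((k + 1 : ℕ) : ℝ) := by push_cast; ring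
        rwa [hcast] at this)
  -- sum of R-terms is dominated by the lintegral
  have hsumI : ∀ k : ℕ, (k:ℝ) * h ≤ t →
      ENNReal.ofReal (∑ j ∈ Finset.range k, h * R (O ((j:ℝ) * h) ω)) ≤ In := by
    intro k hkt
    rw [ENNReal.ofReal_sum_of_nonneg (fun j _ => mul_nonneg hh.le (hR0 _))]
    calc ∑ j ∈ Finset.range k, ENNReal.ofReal (h * R (O ((j:ℝ) * h) ω))
        = ∑ j ∈ Finset.range k, ENNReal.ofReal h * ENNReal.ofReal (R (O ((j:ℝ) * h) ω)) := by
          exact Finset.sum_congr rfl fun j _ => ENNReal.ofReal_mul hh.le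
      _ = ∫⁻ u in Set.Ioc 0 ((k:ℝ) * h), ENNReal.ofReal (R (O (hfloor h u) ω)) :=
          Stmt2Aux.sum_eq_lintegral hh (fun x => ENNReal.ofReal (R (O x ω))) k
      _ ≤ In := by rw [hIdef]; exact lintegral_mono_set (Set.Ioc_subset_Ioc_right hkt)
  -- pointwise bound on U (Y ⌊s⌋ ω)
  have hptwU : ∀ s ∈ Set.Ioo (0:ℝ) t, ENNReal.ofReal (U (Y (hfloor h s) ω)) ≤
      ENNReal.ofReal (Real.exp (c * t)) * (ENNReal.ofReal (U (Y 0 ω)) + In) := by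
    intro s hs
    set k : ℕ := (⌊s / h⌋).toNat with hkd
    have hflnn : (0:ℤ) ≤ ⌊s / h⌋ := Int.floor_nonneg.mpr (div_nonneg hs.1.le hh.le)
    have hfl : ⌊s / h⌋ = (k : ℤ) := (Int.toNat_of_nonneg hflnn).symm
    have hkh : hfloor h s = (k:ℝ) * h := by unfold hfloor; rw [hfl]; push_cast; ring
    have hkhs : (k:ℝ) * h ≤ s := by rw [← hkh]; exact Stmt2Aux.hfloor_le hh s
    have hkt : (k:ℝ) * h ≤ t := le_trans hkhs hs.2.le
    have hkM : k ≤ M := by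
      by_contra hcon
      push_neg at hcon
      have h1 : (M:ℝ) + 1 ≤ (k:ℝ) := by exact_mod_cast hcon
      nlinarith [mul_le_mul_of_nonneg_right h1 hh.le]
    have hSnn : 0 ≤ ∑ j ∈ Finset.range k, h * R (O ((j:ℝ) * h) ω) :=
      Finset.sum_nonneg fun j _ => mul_nonneg hh.le (hR0 _)
    rw [hkh]
    have hg := hgrid k hkM
    simp only [Nat.cast_zero, zero_mul] at hg
    calc ENNReal.ofReal (U (Y ((k:ℝ) * h) ω))
        ≤ ENNReal.ofReal (Real.exp (c * ((k:ℝ) * h)) *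
            (U (Y 0 ω) + ∑ j ∈ Finset.range k, h * R (O ((j:ℝ) * h) ω))) :=
          ENNReal.ofReal_le_ofReal hg
      _ = ENNReal.ofReal (Real.exp (c * ((k:ℝ) * h))) *
            (ENNReal.ofReal (U (Y 0 ω)) +
              ENNReal.ofReal (∑ j ∈ Finset.range k, h * R (O ((j:ℝ) * h) ω))) := by
          rw [ENNReal.ofReal_mul (Real.exp_nonneg _), ENNReal.ofReal_add (hU0 _) hSnn]
      _ ≤ ENNReal.ofReal (Real.exp (c * t)) * (ENNReal.ofReal (U (Y 0 ω)) + In) := by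
          exact mul_le_mul'
            (ENNReal.ofReal_le_ofReal
              (Real.exp_le_exp.mpr (mul_le_mul_of_nonneg_left hkt hc)))
            (add_le_add le_rfl (hsumI k hkt))
  -- pointwise bound on U (Y ⌊s⌋ ω) ^ q
  have hEb : ∀ s ∈ Set.Ioo (0:ℝ) t,
      ENNReal.ofReal (U (Y (hfloor h s) ω) ^ q) ≤ Eb := by
    intro s hs
    rw [← ENNReal.ofReal_rpow_of_nonneg (hU0 _) hq.le]
    have h1 : (ENNReal.ofReal (U (Y (hfloor h s) ω))) ^ q ≤
        (ENNReal.ofReal (Real.exp (c * t)) * (ENNReal.ofReal (U (Y 0 ω)) + In)) ^ q :=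
      ENNReal.rpow_le_rpow (hptwU s hs) hq.le
    have h2 : (ENNReal.ofReal (Real.exp (c * t)) * (ENNReal.ofReal (U (Y 0 ω)) + In)) ^ q
        = ENNReal.ofReal (Real.exp (c * q * t)) *
            (ENNReal.ofReal (U (Y 0 ω)) + In) ^ q := by
      rw [ENNReal.mul_rpow_of_nonneg _ _ hq.le]
      congr 1
      rw [ENNReal.ofReal_rpow_of_nonneg (Real.exp_nonneg _) hq.le, ← Real.exp_mul]
      ring_nf
    have h3 : (ENNReal.ofReal (U (Y 0 ω)) + In) ^ q ≤
        ENNReal.ofReal (2 ^ max (q - 1) 0) *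
          ((ENNReal.ofReal (U (Y 0 ω))) ^ q + In ^ q) := by
      rcases le_total q 1 with hq1 | hq1
      · rw [max_eq_right (by linarith : q - 1 ≤ 0), Real.rpow_zero, ENNReal.ofReal_one, one_mul]
        exact ENNReal.rpow_add_le_add_rpow _ _ hq.le hq1
      · rw [max_eq_left (by linarith : (0:ℝ) ≤ q - 1)]
        have h2eq : ENNReal.ofReal ((2:ℝ) ^ (q - 1)) = (2:ℝ≥0∞) ^ (q - 1) := by
          rw [← ENNReal.ofReal_rpow_of_pos two_pos]
          norm_num
        rw [h2eq]
        exact ENNReal.rpow_add_le_mul_rpow_add_rpow _ _ hq1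
    calc (ENNReal.ofReal (U (Y (hfloor h s) ω))) ^ q
        ≤ ENNReal.ofReal (Real.exp (c * q * t)) *
            (ENNReal.ofReal (U (Y 0 ω)) + In) ^ q := h2 ▸ h1
      _ ≤ ENNReal.ofReal (Real.exp (c * q * t)) *
            (ENNReal.ofReal (2 ^ max (q - 1) 0) *
              ((ENNReal.ofReal (U (Y 0 ω))) ^ q + In ^ q)) := mul_le_mul_right h3 _
      _ = ENNReal.ofReal (2 ^ max (q - 1) 0 * Real.exp (c * q * t)) *
            ((ENNReal.ofReal (U (Y 0 ω))) ^ q + In ^ q) := by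
          rw [← mul_assoc, ← ENNReal.ofReal_mul (Real.exp_nonneg _),
            mul_comm (Real.exp (c * q * t)) _]
      _ = Eb := by
          rw [hEdef, ENNReal.ofReal_rpow_of_nonneg (hU0 _) hq.le]
  -- value of the singular lintegral
  have hφint : ∫⁻ s in Set.Ioo (0:ℝ) t, ENNReal.ofReal ((t - s) ^ (-σ)) =
      ENNReal.ofReal (t ^ (1 - σ) / (1 - σ)) := by
    have hexp : (-1:ℝ) < -σ := by linarith
    have hiv : IntervalIntegrable (fun u : ℝ => u ^ (-σ)) volume 0 t :=
      intervalIntegral.intervalIntegrable_rpow' hexp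
    have hiv2 : IntervalIntegrable (fun s : ℝ => (t - s) ^ (-σ)) volume 0 t := by
      have h0 := (hiv.comp_sub_left t).symm
      simpa using h0
    have hio : IntegrableOn (fun s : ℝ => (t - s) ^ (-σ)) (Set.Ioo 0 t) :=
      ((intervalIntegrable_iff_integrableOn_Ioc_of_le ht.le).mp hiv2).mono_set
        Set.Ioo_subset_Ioc_self
    have hnn : 0 ≤ᵐ[volume.restrict (Set.Ioo (0:ℝ) t)] fun s : ℝ => (t - s) ^ (-σ) := by
      refine (ae_restrict_iff' measurableSet_Ioo).mpr (ae_of_all _ fun x hx => ?_)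
      exact Real.rpow_nonneg (by linarith [hx.2] : (0:ℝ) ≤ t - x) _
    rw [← ofReal_integral_eq_lintegral_ofReal hio hnn]
    congr 1
    rw [setIntegral_congr_set Ioo_ae_eq_Ioc, ← intervalIntegral.integral_of_le ht.le]
    have hcs := intervalIntegral.integral_comp_sub_left (a := (0:ℝ)) (b := t)
      (fun u : ℝ => u ^ (-σ)) t
    rw [hcs, sub_self, sub_zero, integral_rpow (Or.inl hexp),
      Real.zero_rpow (by linarith : -σ + 1 ≠ 0)]
    rw [show -σ + 1 = 1 - σ by ring]
    ring
  -- pointwise bound for the integrand norm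
  have hpt : ∀ s ∈ Set.Ioo (0:ℝ) t,
      ENNReal.ofReal ‖S (hfloor h s) t
          (if Vm (Y (hfloor h s) ω + O (hfloor h s) ω) ≤ (M : ℝ) / T
            then F (Y (hfloor h s) ω + O (hfloor h s) ω) else 0)‖ ≤
        ENNReal.ofReal C * K * (ENNReal.ofReal ((t - s) ^ (-σ)) *
          ((1 + Eb) + ENNReal.ofReal (U (O (hfloor h s) ω) ^ q))) := by
    intro s hs
    have hts : 0 < t - s := by linarith [hs.2]
    have hUynn : 0 ≤ U (Y (hfloor h s) ω) ^ q := Real.rpow_nonneg (hU0 _) _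
    have hUonn : 0 ≤ U (O (hfloor h s) ω) ^ q := Real.rpow_nonneg (hU0 _) _
    have hGn : ‖(if Vm (Y (hfloor h s) ω + O (hfloor h s) ω) ≤ (M : ℝ) / T
          then F (Y (hfloor h s) ω + O (hfloor h s) ω) else 0 : W)‖
        ≤ C * (1 + U (Y (hfloor h s) ω) ^ q + U (O (hfloor h s) ω) ^ q) := by
      split_ifs with hif
      · exact hFgrowth _ _
      · rw [norm_zero]
        have : (0:ℝ) ≤ 1 + U (Y (hfloor h s) ω) ^ q + U (O (hfloor h s) ω) ^ q := by linarith
        exact mul_nonneg hC this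
    have h1 : ENNReal.ofReal ‖S (hfloor h s) t
          (if Vm (Y (hfloor h s) ω + O (hfloor h s) ω) ≤ (M : ℝ) / T
            then F (Y (hfloor h s) ω + O (hfloor h s) ω) else 0)‖ ≤
        ENNReal.ofReal ‖S (hfloor h s) t‖ *
          ENNReal.ofReal (C * (1 + U (Y (hfloor h s) ω) ^ q + U (O (hfloor h s) ω) ^ q)) := by
      rw [← ENNReal.ofReal_mul (norm_nonneg _)]
      refine ENNReal.ofReal_le_ofReal (le_trans ((S (hfloor h s) t).le_opNorm _) ?_)
      exact mul_le_mul_of_nonneg_left hGn (norm_nonneg _)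
    have h2 : ENNReal.ofReal ‖S (hfloor h s) t‖ ≤ ENNReal.ofReal ((t - s) ^ (-σ)) * K := by
      have hK : ENNReal.ofReal ((t - s) ^ σ * ‖S (hfloor h s) t‖) ≤ K := by
        rw [hKdef]
        exact le_biSup (fun s => ENNReal.ofReal ((t - s) ^ σ * ‖S (hfloor h s) t‖))
          (show s ∈ Set.Ico (0:ℝ) t from ⟨hs.1.le, hs.2⟩)
      have heq : ENNReal.ofReal ‖S (hfloor h s) t‖ =
          ENNReal.ofReal ((t - s) ^ (-σ)) *
            ENNReal.ofReal ((t - s) ^ σ * ‖S (hfloor h s) t‖) := by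
        rw [← ENNReal.ofReal_mul (Real.rpow_nonneg hts.le _), ← mul_assoc,
          Real.rpow_neg hts.le, inv_mul_cancel₀ (Real.rpow_pos_of_pos hts σ).ne', one_mul]
      rw [heq]
      exact mul_le_mul_right hK _
    have h3 : ENNReal.ofReal (C * (1 + U (Y (hfloor h s) ω) ^ q + U (O (hfloor h s) ω) ^ q)) =
        ENNReal.ofReal C * ((1 + ENNReal.ofReal (U (Y (hfloor h s) ω) ^ q)) +
          ENNReal.ofReal (U (O (hfloor h s) ω) ^ q)) := by
      rw [ENNReal.ofReal_mul hC, ENNReal.ofReal_add (by linarith) hUonn,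
        ENNReal.ofReal_add (by norm_num) hUynn, ENNReal.ofReal_one]
    calc ENNReal.ofReal ‖S (hfloor h s) t
          (if Vm (Y (hfloor h s) ω + O (hfloor h s) ω) ≤ (M : ℝ) / T
            then F (Y (hfloor h s) ω + O (hfloor h s) ω) else 0)‖
        ≤ (ENNReal.ofReal ((t - s) ^ (-σ)) * K) *
            (ENNReal.ofReal C * ((1 + ENNReal.ofReal (U (Y (hfloor h s) ω) ^ q)) +
              ENNReal.ofReal (U (O (hfloor h s) ω) ^ q))) := by
          rw [h3] at h1
          exact le_trans h1 (mul_le_mul_left h2 _)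
      _ ≤ (ENNReal.ofReal ((t - s) ^ (-σ)) * K) *
            (ENNReal.ofReal C * ((1 + Eb) + ENNReal.ofReal (U (O (hfloor h s) ω) ^ q))) := by
          exact mul_le_mul_right
            (mul_le_mul_right (add_le_add_left (add_le_add_right (hEb s hs) 1) _) _) _
      _ = ENNReal.ofReal C * K * (ENNReal.ofReal ((t - s) ^ (-σ)) *
            ((1 + Eb) + ENNReal.ofReal (U (O (hfloor h s) ω) ^ q))) := by ring
  -- the main lintegral bound
  have hmeasψ : Measurable fun s : ℝ => ENNReal.ofReal (U (O (hfloor h s) ω) ^ q) :=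
    Stmt2Aux.measurable_comp_hfloor h (fun x => ENNReal.ofReal (U (O x ω) ^ q))
  have hmeasφ : Measurable fun s : ℝ => ENNReal.ofReal ((t - s) ^ (-σ)) :=
    ((measurable_const.sub measurable_id).pow measurable_const).ennreal_ofReal
  have hKle : ∫⁻ s in Set.Ioc (0:ℝ) t, ENNReal.ofReal ‖S (hfloor h s) t
          (if Vm (Y (hfloor h s) ω + O (hfloor h s) ω) ≤ (M : ℝ) / T
            then F (Y (hfloor h s) ω + O (hfloor h s) ω) else 0)‖ ≤
      ENNReal.ofReal C * K *
        (Jd + ENNReal.ofReal (t ^ (1 - σ) / (1 - σ)) * (1 + Eb)) := by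
    calc ∫⁻ s in Set.Ioc (0:ℝ) t, ENNReal.ofReal ‖S (hfloor h s) t
            (if Vm (Y (hfloor h s) ω + O (hfloor h s) ω) ≤ (M : ℝ) / T
              then F (Y (hfloor h s) ω + O (hfloor h s) ω) else 0)‖
        = ∫⁻ s in Set.Ioo (0:ℝ) t, ENNReal.ofReal ‖S (hfloor h s) t
            (if Vm (Y (hfloor h s) ω + O (hfloor h s) ω) ≤ (M : ℝ) / T
              then F (Y (hfloor h s) ω + O (hfloor h s) ω) else 0)‖ :=
          (setLIntegral_congr Ioo_ae_eq_Ioc).symm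
      _ ≤ ∫⁻ s in Set.Ioo (0:ℝ) t, ENNReal.ofReal C * K *
            (ENNReal.ofReal ((t - s) ^ (-σ)) *
              ((1 + Eb) + ENNReal.ofReal (U (O (hfloor h s) ω) ^ q))) := by
          refine setLIntegral_mono ?_ hpt
          exact measurable_const.mul (hmeasφ.mul (measurable_const.add hmeasψ))
      _ = ENNReal.ofReal C * K * ∫⁻ s in Set.Ioo (0:ℝ) t,
            ENNReal.ofReal ((t - s) ^ (-σ)) *
              ((1 + Eb) + ENNReal.ofReal (U (O (hfloor h s) ω) ^ q)) :=
          lintegral_const_mul _ (hmeasφ.mul (measurable_const.add hmeasψ))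
      _ = ENNReal.ofReal C * K *
            ((∫⁻ s in Set.Ioo (0:ℝ) t, ENNReal.ofReal ((t - s) ^ (-σ)) * (1 + Eb)) +
              ∫⁻ s in Set.Ioo (0:ℝ) t, ENNReal.ofReal ((t - s) ^ (-σ)) *
                ENNReal.ofReal (U (O (hfloor h s) ω) ^ q)) := by
          congr 1
          rw [← lintegral_add_left (f := fun s => ENNReal.ofReal ((t - s) ^ (-σ)) * (1 + Eb)) (hmeasφ.mul measurable_const)]
          exact lintegral_congr fun s => by ring
      _ ≤ ENNReal.ofReal C * K *
            (ENNReal.ofReal (t ^ (1 - σ) / (1 - σ)) * (1 + Eb) + Jd) := by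
          refine mul_le_mul_right (add_le_add ?_ ?_) _
          · rw [lintegral_mul_const _ hmeasφ, hφint]
          · calc ∫⁻ s in Set.Ioo (0:ℝ) t, ENNReal.ofReal ((t - s) ^ (-σ)) *
                  ENNReal.ofReal (U (O (hfloor h s) ω) ^ q)
                = ∫⁻ s in Set.Ioo (0:ℝ) t,
                    ENNReal.ofReal ((t - s) ^ (-σ) * U (O (hfloor h s) ω) ^ q) := by
                  refine setLIntegral_congr_fun_ae measurableSet_Ioo (ae_of_all _ fun x hx => ?_)
                  rw [ENNReal.ofReal_mul (Real.rpow_nonneg (by linarith [hx.2] : (0:ℝ) ≤ t - x) _)]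
              _ ≤ Jd := by rw [hJdef]; exact lintegral_mono_set Set.Ioo_subset_Ioc_self
      _ = ENNReal.ofReal C * K *
            (Jd + ENNReal.ofReal (t ^ (1 - σ) / (1 - σ)) * (1 + Eb)) := by ring
  -- putting everything together
  rw [hYeq ω t ht htT]
  calc ENNReal.ofReal ‖S 0 t (ι (Y 0 ω)) +
        ∫ s in Set.Ioc (0 : ℝ) t, S (hfloor h s) t
          (if Vm (Y (hfloor h s) ω + O (hfloor h s) ω) ≤ (M : ℝ) / T
            then F (Y (hfloor h s) ω + O (hfloor h s) ω) else 0)‖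
      ≤ ENNReal.ofReal (‖S 0 t (ι (Y 0 ω))‖ +
          ‖∫ s in Set.Ioc (0 : ℝ) t, S (hfloor h s) t
          (if Vm (Y (hfloor h s) ω + O (hfloor h s) ω) ≤ (M : ℝ) / T
            then F (Y (hfloor h s) ω + O (hfloor h s) ω) else 0)‖) :=
        ENNReal.ofReal_le_ofReal (norm_add_le _ _)
    _ ≤ ENNReal.ofReal ‖S 0 t (ι (Y 0 ω))‖ +
        ENNReal.ofReal ‖∫ s in Set.Ioc (0 : ℝ) t, S (hfloor h s) t
          (if Vm (Y (hfloor h s) ω + O (hfloor h s) ω) ≤ (M : ℝ) / T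
            then F (Y (hfloor h s) ω + O (hfloor h s) ω) else 0)‖ :=
        ENNReal.ofReal_add_le
    _ ≤ ENNReal.ofReal (‖(S 0 t).comp ι‖ * ‖Y 0 ω‖) +
        ENNReal.ofReal C * K *
          (Jd + ENNReal.ofReal (t ^ (1 - σ) / (1 - σ)) * (1 + Eb)) := by
        refine add_le_add (ENNReal.ofReal_le_ofReal (((S 0 t).comp ι).le_opNorm (Y 0 ω))) ?_
        refine le_trans ?_ hKle
        calc ENNReal.ofReal ‖∫ s in Set.Ioc (0 : ℝ) t, S (hfloor h s) t
              (if Vm (Y (hfloor h s) ω + O (hfloor h s) ω) ≤ (M : ℝ) / T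
                then F (Y (hfloor h s) ω + O (hfloor h s) ω) else 0)‖
            = (‖∫ s in Set.Ioc (0 : ℝ) t, S (hfloor h s) t
              (if Vm (Y (hfloor h s) ω + O (hfloor h s) ω) ≤ (M : ℝ) / T
                then F (Y (hfloor h s) ω + O (hfloor h s) ω) else 0)‖₊ : ℝ≥0∞) :=
              ofReal_norm _
          _ ≤ ∫⁻ s in Set.Ioc (0 : ℝ) t, (‖S (hfloor h s) t
              (if Vm (Y (hfloor h s) ω + O (hfloor h s) ω) ≤ (M : ℝ) / T
                then F (Y (hfloor h s) ω + O (hfloor h s) ω) else 0)‖₊ : ℝ≥0∞) :=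
              enorm_integral_le_lintegral_enorm _
          _ = ∫⁻ s in Set.Ioc (0 : ℝ) t, ENNReal.ofReal ‖S (hfloor h s) t
              (if Vm (Y (hfloor h s) ω + O (hfloor h s) ω) ≤ (M : ℝ) / T
                then F (Y (hfloor h s) ω + O (hfloor h s) ω) else 0)‖ :=
              lintegral_congr fun s => (ofReal_norm _).symm
    _ = ENNReal.ofReal (‖(S 0 t).comp ι‖ * ‖Y 0 ω‖) +
        ENNReal.ofReal C * K *
          (Jd + ENNReal.ofReal (t ^ (1 - σ) / (1 - σ)) * (1 + Eb)) := rfl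
end

section
/- For every p ∈ [1,∞) and every t ∈ (0,T] it holds that ‖Y^X_t − Y^O_t‖_{L^p(P;V)} ≤ ( ∫_0^t ‖E_{t−s} − S_{⌊s⌋,t}‖_{L(H,V)} ds ) · ( sup_{s∈[0,T)} ‖F(Y_s)‖_{L^p(P;H)} ) + ( T^{1+α−σ} / ((1−σ) M^α) ) · ( sup_{s∈(0,T)} s^σ ‖E_s‖_{L(H,V)} ) · ( sup_{s∈[0,T)} ‖𝕍(Y_s)‖_{L^{2pα}(P;ℝ)}^α · ‖F(Y_s)‖_{L^{2p}(P;H)} ), where all L^r-norms, suprema and integrals take values in [0,∞] and the inequality is understood in [0,∞]. (Lemma 4.1 of the paper, stated for an arbitrary measurable operator family E in place of the analytic semigroup (e^{sA})_{s∈(0,T]}.) -/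
open MeasureTheory Set Function ENNReal Filter Topology

lemma iSup_min_natCast (a : ℝ≥0∞) : ⨆ n : ℕ, min a n = a := by
  apply le_antisymm (iSup_le fun n => min_le_left _ _)
  rcases eq_or_ne a ∞ with rfl | ha
  · rw [top_le_iff]
    have h : ∀ n : ℕ, min (∞ : ℝ≥0∞) n = n := fun n => min_eq_right le_top
    simp only [h]
    exact ENNReal.iSup_natCast
  · obtain ⟨n, hn⟩ := ENNReal.exists_nat_gt ha
    exact le_iSup_of_le n (le_min le_rfl hn.le)

lemma iSup_min_natCast_rpow (a : ℝ≥0∞) {p : ℝ} (hp0 : 0 < p) :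
    ⨆ n : ℕ, (min a n) ^ p = a ^ p := by
  have := OrderIso.map_iSup (ENNReal.orderIsoRpow p hp0) (fun n : ℕ => min a n)
  simp only [ENNReal.orderIsoRpow_apply] at this
  rw [← this, iSup_min_natCast]

/-- Minkowski's integral inequality for `ℝ≥0∞`-valued functions. -/
theorem lintegral_minkowski' {X Ω : Type*} [MeasurableSpace X] [MeasurableSpace Ω]
    {ν : Measure X} {μ : Measure Ω} [SigmaFinite ν] [IsFiniteMeasure μ]
    {p : ℝ} (hp : 1 ≤ p)
    {F : X → Ω → ℝ≥0∞} (hF : Measurable (Function.uncurry F)) :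
    (∫⁻ ω, (∫⁻ s, F s ω ∂ν) ^ p ∂μ) ^ (1/p) ≤
      ∫⁻ s, (∫⁻ ω, (F s ω) ^ p ∂μ) ^ (1/p) ∂ν := by
  have hp0 : (0:ℝ) < p := lt_of_lt_of_le one_pos hp
  have hFswap : Measurable (Function.uncurry fun ω s => F s ω) :=
    hF.comp measurable_swap
  have hImeas : Measurable (fun ω => ∫⁻ s, F s ω ∂ν) :=
    Measurable.lintegral_prod_right' hFswap
  set I : Ω → ℝ≥0∞ := fun ω => ∫⁻ s, F s ω ∂ν with hI
  set R : ℝ≥0∞ := ∫⁻ s, (∫⁻ ω, (F s ω) ^ p ∂μ) ^ (1/p) ∂ν with hR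
  rcases eq_or_lt_of_le hp with rfl | hp1
  · -- p = 1 : Tonelli
    simp only [hR, hI, ENNReal.rpow_one, one_div_one]
    exact le_of_eq (lintegral_lintegral_swap hFswap.aemeasurable)
  -- p > 1
  have hq : Real.HolderConjugate p (p/(p-1)) := Real.HolderConjugate.conjExponent hp1
  set q : ℝ := p/(p-1) with hqdef
  have hq0 : (0:ℝ) < q := hq.right_pos
  have key : ∀ n : ℕ, ∫⁻ ω, (min (I ω) n) ^ p ∂μ ≤ R ^ p := by
    intro n
    set J : Ω → ℝ≥0∞ := fun ω => min (I ω) n with hJ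
    have hJmeas : Measurable J := hImeas.min measurable_const
    have hJn : ∀ ω, J ω ≤ n := fun ω => min_le_right _ _
    have hJne : ∀ ω, J ω ≠ ∞ := fun ω => ((hJn ω).trans_lt (by simp)).ne
    set B : ℝ≥0∞ := ∫⁻ ω, J ω ^ p ∂μ with hB
    have hBfin : B ≠ ∞ := by
      refine (lt_of_le_of_lt (lintegral_mono fun ω => ?_)
        (?_ : ∫⁻ _ : Ω, (n:ℝ≥0∞)^p ∂μ < ∞)).ne
      · exact ENNReal.rpow_le_rpow (hJn ω) hp0.le
      · rw [lintegral_const]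
        exact ENNReal.mul_lt_top (ENNReal.rpow_lt_top_of_nonneg hp0.le (by simp))
          (measure_lt_top μ _)
    have step1 : B ≤ ∫⁻ ω, J ω ^ (p-1) * I ω ∂μ := by
      refine lintegral_mono fun ω => ?_
      rcases eq_or_ne (J ω) 0 with h0 | h0
      · simp [h0, ENNReal.zero_rpow_of_pos hp0]
      · have hsplit : J ω ^ p = J ω ^ (p-1) * J ω := by
          have hps : p - 1 + 1 = p := by ring
          nth_rewrite 1 [← hps]
          rw [ENNReal.rpow_add _ _ h0 (hJne ω), ENNReal.rpow_one]
        rw [hsplit]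
        exact mul_le_mul' le_rfl (min_le_left _ _)
    have step2 : ∫⁻ ω, J ω ^ (p-1) * I ω ∂μ = ∫⁻ s, ∫⁻ ω, J ω ^ (p-1) * F s ω ∂μ ∂ν := by
      have h1 : ∀ ω, J ω ^ (p-1) * I ω = ∫⁻ s, J ω ^ (p-1) * F s ω ∂ν := fun ω =>
        (lintegral_const_mul' _ _ (ENNReal.rpow_ne_top_of_nonneg (by linarith) (hJne ω))).symm
      simp_rw [h1]
      exact lintegral_lintegral_swap
        ((((hJmeas.comp measurable_fst).pow_const _).mul
          (hF.comp measurable_swap)).aemeasurable)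
    have step3 : ∀ s, ∫⁻ ω, J ω ^ (p-1) * F s ω ∂μ ≤ (∫⁻ ω, (F s ω)^p ∂μ)^(1/p) * B^(1/q) := by
      intro s
      have hFs : AEMeasurable (fun ω => F s ω) μ :=
        (hF.comp (measurable_prodMk_left (m := inferInstance))).aemeasurable
      have hHold := ENNReal.lintegral_mul_le_Lp_mul_Lq μ hq hFs
        ((hJmeas.pow_const (p-1)).aemeasurable)
      have heq : ∀ ω, (J ω ^ (p-1)) ^ q = J ω ^ p := by
        intro ω
        rw [← ENNReal.rpow_mul, hq.sub_one_mul_conj]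
      calc ∫⁻ ω, J ω ^ (p-1) * F s ω ∂μ = ∫⁻ ω, F s ω * J ω ^ (p-1) ∂μ := by
            simp_rw [mul_comm]
        _ ≤ (∫⁻ ω, (F s ω)^p ∂μ)^(1/p) * (∫⁻ ω, (J ω ^ (p-1))^q ∂μ)^(1/q) := hHold
        _ = (∫⁻ ω, (F s ω)^p ∂μ)^(1/p) * B^(1/q) := by simp_rw [heq]; rfl
    have hcomb : B ≤ R * B^(1/q) := by
      calc B ≤ ∫⁻ s, ∫⁻ ω, J ω ^ (p-1) * F s ω ∂μ ∂ν := step2 ▸ step1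
        _ ≤ ∫⁻ s, (∫⁻ ω, (F s ω)^p ∂μ)^(1/p) * B^(1/q) ∂ν := lintegral_mono step3
        _ = R * B^(1/q) := lintegral_mul_const' _ _
            (ENNReal.rpow_ne_top_of_nonneg (by positivity) hBfin)
    rcases eq_or_ne B 0 with hB0 | hB0
    · rw [hB0]; exact zero_le'
    have hBq : B^(1/q) ≠ 0 := by
      rw [Ne, ENNReal.rpow_eq_zero_iff]
      rintro (⟨h,_⟩|⟨h,_⟩)
      exacts [hB0 h, hBfin h]
    have hBqt : B^(1/q) ≠ ∞ := ENNReal.rpow_ne_top_of_nonneg (by positivity) hBfin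
    have hmul : B^(1/p) * B^(1/q) = B := by
      rw [← ENNReal.rpow_add _ _ hB0 hBfin]
      rw [show 1/p + 1/q = 1 by
        simpa [one_div] using hq.inv_add_inv_eq_one]
      exact ENNReal.rpow_one B
    have h1p : B ^ (1/p) ≤ R :=
      (ENNReal.mul_le_mul_iff_left hBq hBqt).mp (by rw [hmul]; exact hcomb)
    calc B = (B^(1/p))^p := by
          rw [← ENNReal.rpow_mul, one_div_mul_cancel hp0.ne', ENNReal.rpow_one]
      _ ≤ R^p := ENNReal.rpow_le_rpow h1p hp0.le
  have hsup : ∫⁻ ω, I ω ^ p ∂μ = ⨆ n : ℕ, ∫⁻ ω, (min (I ω) n) ^ p ∂μ := by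
    rw [← lintegral_iSup (fun n => (hImeas.min measurable_const).pow_const p)
      (fun i j hij ω => ENNReal.rpow_le_rpow
        (min_le_min le_rfl (Nat.cast_le.mpr hij)) hp0.le)]
    congr 1
    funext ω
    rw [iSup_min_natCast_rpow _ hp0]
  show (∫⁻ ω, I ω ^ p ∂μ) ^ (1/p) ≤ R
  rw [hsup]
  calc (⨆ n : ℕ, ∫⁻ ω, (min (I ω) n) ^ p ∂μ) ^ (1/p) ≤ (R^p)^(1/p) :=
        ENNReal.rpow_le_rpow (iSup_le key) (by positivity)
    _ = R := by rw [← ENNReal.rpow_mul, mul_one_div_cancel hp0.ne', ENNReal.rpow_one]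

theorem measurable_opNorm_family' {H V : Type*} [NormedAddCommGroup H] [NormedSpace ℝ H]
    [TopologicalSpace.SeparableSpace H] [NormedAddCommGroup V] [NormedSpace ℝ V]
    [MeasurableSpace V] [OpensMeasurableSpace V]
    {X : Type*} [MeasurableSpace X] (A : X → H →L[ℝ] V)
    (hA : ∀ x : H, Measurable fun s => A s x) :
    Measurable fun s => ‖A s‖ := by
  have : Nonempty H := ⟨0⟩
  set d : ℕ → H := TopologicalSpace.denseSeq H with hddef
  have hd : DenseRange d := TopologicalSpace.denseRange_denseSeq H
  have hnorm : ∀ B : H →L[ℝ] V, ‖B‖ = ⨆ n : ℕ, ‖B (d n)‖ / ‖d n‖ := by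
    intro B
    have hub : ∀ n : ℕ, ‖B (d n)‖ / ‖d n‖ ≤ ‖B‖ := by
      intro n
      rcases eq_or_ne (d n) 0 with h0 | h0
      · simp [h0]
      · exact div_le_of_le_mul₀ (norm_nonneg _) (norm_nonneg _) (B.le_opNorm _)
    have hbdd : BddAbove (Set.range fun n : ℕ => ‖B (d n)‖ / ‖d n‖) := by
      refine ⟨‖B‖, ?_⟩
      rintro _ ⟨n, rfl⟩
      exact hub n
    refine le_antisymm ?_ (ciSup_le hub)
    refine B.opNorm_le_bound ?_ fun x => ?_
    · exact le_ciSup_of_le hbdd 0 (by positivity)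
    rcases eq_or_ne x 0 with rfl | hx
    · simp
    have hxn : ‖x‖ ≠ 0 := norm_ne_zero_iff.mpr hx
    have hcont : ContinuousAt (fun y : H => ‖B y‖ / ‖y‖) x :=
      ((B.continuous.norm).continuousAt).div continuous_norm.continuousAt hxn
    have hne : (𝓝[Set.range d] x).NeBot :=
      mem_closure_iff_nhdsWithin_neBot.mp (hd x)
    have hev : ∀ᶠ y in 𝓝[Set.range d] x, ‖B y‖ / ‖y‖ ≤ ⨆ n : ℕ, ‖B (d n)‖ / ‖d n‖ := by
      filter_upwards [self_mem_nhdsWithin] with y hy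
      obtain ⟨n, rfl⟩ := hy
      exact le_ciSup hbdd n
    have hlim : Tendsto (fun y : H => ‖B y‖ / ‖y‖) (𝓝[Set.range d] x)
        (𝓝 (‖B x‖ / ‖x‖)) := hcont.continuousWithinAt.tendsto
    have hx_le : ‖B x‖ / ‖x‖ ≤ ⨆ n : ℕ, ‖B (d n)‖ / ‖d n‖ := le_of_tendsto hlim hev
    calc ‖B x‖ = ‖B x‖ / ‖x‖ * ‖x‖ := by field_simp
      _ ≤ (⨆ n : ℕ, ‖B (d n)‖ / ‖d n‖) * ‖x‖ :=
        mul_le_mul_of_nonneg_right hx_le (norm_nonneg _)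
  simp only [hnorm]
  exact Measurable.iSup fun n => ((hA (d n)).norm).div measurable_const

theorem eLpNorm_integral_le_lintegral_eLpNorm' {X Ω V : Type*}
    [MeasurableSpace X] [MeasurableSpace Ω]
    [NormedAddCommGroup V] [NormedSpace ℝ V] [MeasurableSpace V] [OpensMeasurableSpace V]
    {ν : Measure X} {μ : Measure Ω} [SigmaFinite ν] [IsFiniteMeasure μ]
    {p : ℝ} (hp : 1 ≤ p) {g : X → Ω → V} (hg : Measurable (Function.uncurry g)) :
    eLpNorm (fun ω => ∫ s, g s ω ∂ν) (ENNReal.ofReal p) μ ≤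
      ∫⁻ s, eLpNorm (g s) (ENNReal.ofReal p) μ ∂ν := by
  have hp0 : (0:ℝ) < p := lt_of_lt_of_le one_pos hp
  have hq0 : ENNReal.ofReal p ≠ 0 := by
    simp [ENNReal.ofReal_eq_zero, not_le, hp0]
  have hqt : ENNReal.ofReal p ≠ ∞ := ENNReal.ofReal_ne_top
  have htoReal : (ENNReal.ofReal p).toReal = p := ENNReal.toReal_ofReal hp0.le
  rw [eLpNorm_eq_lintegral_rpow_enorm hq0 hqt, htoReal]
  have hFm : Measurable (Function.uncurry fun s ω => (‖g s ω‖₊ : ℝ≥0∞)) := by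
    exact hg.nnnorm.coe_nnreal_ennreal
  calc (∫⁻ ω, (‖∫ s, g s ω ∂ν‖₊ : ℝ≥0∞) ^ p ∂μ) ^ (1/p)
      ≤ (∫⁻ ω, (∫⁻ s, (‖g s ω‖₊ : ℝ≥0∞) ∂ν) ^ p ∂μ) ^ (1/p) := by
        gcongr with ω
        exact enorm_integral_le_lintegral_enorm _
    _ ≤ ∫⁻ s, (∫⁻ ω, (‖g s ω‖₊ : ℝ≥0∞) ^ p ∂μ) ^ (1/p) ∂ν :=
        lintegral_minkowski' hp hFm
    _ = ∫⁻ s, eLpNorm (g s) (ENNReal.ofReal p) μ ∂ν := by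
        refine lintegral_congr fun s => ?_
        simp only [eLpNorm_eq_lintegral_rpow_enorm hq0 hqt, htoReal, enorm_eq_nnnorm]

set_option maxHeartbeats 2000000 in
theorem stmt5
    (T : ℝ) (hT : 0 < T) (M : ℕ) (hM : 0 < M)
    (σ α : ℝ) (hσ : σ ∈ Set.Ico (0 : ℝ) 1) (hα : 0 < α)
    {H V : Type*}
    [NormedAddCommGroup H] [InnerProductSpace ℝ H] [CompleteSpace H]
    [TopologicalSpace.SeparableSpace H] [MeasurableSpace H] [BorelSpace H]
    [NormedAddCommGroup V] [NormedSpace ℝ V] [CompleteSpace V]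
    [TopologicalSpace.SeparableSpace V] [MeasurableSpace V] [BorelSpace V]
    (F : V → H) (hFm : Measurable F)
    (Vm : V → ℝ) (hVm0 : ∀ v, 0 ≤ Vm v) (hVmm : Measurable Vm)
    (E : ℝ → (H →L[ℝ] V)) (hEm : ∀ x : H, Measurable fun s : ℝ => E s x)
    (S : ℝ → ℝ → (H →L[ℝ] V)) (hSm : ∀ x : H, Measurable fun p : ℝ × ℝ => S p.1 p.2 x)
    {Ω : Type*} [MeasurableSpace Ω] (P : Measure Ω) [IsProbabilityMeasure P]
    (Y : ℝ → Ω → V)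
    (hYsm : ∀ s : ℝ, StronglyMeasurable fun ω => Y s ω)
    (hYXint : ∀ ω : Ω, ∀ t : ℝ, 0 < t → t ≤ T →
      IntegrableOn (fun s => E (t - s) (F (Y (hfloor (T / M) s) ω))) (Set.Ioc 0 t))
    (hYOint : ∀ ω : Ω, ∀ t : ℝ, 0 < t → t ≤ T →
      IntegrableOn
        (fun s => S (hfloor (T / M) s) t
          (if Vm (Y (hfloor (T / M) s) ω) ≤ (M : ℝ) / T
            then F (Y (hfloor (T / M) s) ω) else 0))
        (Set.Ioc 0 t))
    (hYXsm : ∀ t : ℝ, 0 < t → t ≤ T →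
      StronglyMeasurable fun ω =>
        ∫ s in Set.Ioc (0 : ℝ) t, E (t - s) (F (Y (hfloor (T / M) s) ω)))
    (hYOsm : ∀ t : ℝ, 0 < t → t ≤ T →
      StronglyMeasurable fun ω =>
        ∫ s in Set.Ioc (0 : ℝ) t, S (hfloor (T / M) s) t
          (if Vm (Y (hfloor (T / M) s) ω) ≤ (M : ℝ) / T
            then F (Y (hfloor (T / M) s) ω) else 0)) :
    ∀ p : ℝ, 1 ≤ p → ∀ t : ℝ, 0 < t → t ≤ T →
      eLpNorm
          (fun ω =>
            (∫ s in Set.Ioc (0 : ℝ) t, E (t - s) (F (Y (hfloor (T / M) s) ω))) -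
              ∫ s in Set.Ioc (0 : ℝ) t, S (hfloor (T / M) s) t
                (if Vm (Y (hfloor (T / M) s) ω) ≤ (M : ℝ) / T
                  then F (Y (hfloor (T / M) s) ω) else 0))
          (ENNReal.ofReal p) P ≤
        (∫⁻ s in Set.Ioc (0 : ℝ) t,
            ENNReal.ofReal ‖E (t - s) - S (hfloor (T / M) s) t‖) *
            (⨆ s ∈ Set.Ico (0 : ℝ) T,
              eLpNorm (fun ω => F (Y s ω)) (ENNReal.ofReal p) P) +
          ENNReal.ofReal (T ^ (1 + α - σ) / ((1 - σ) * (M : ℝ) ^ α)) *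
            (⨆ s ∈ Set.Ioo (0 : ℝ) T, ENNReal.ofReal (s ^ σ * ‖E s‖)) *
            (⨆ s ∈ Set.Ico (0 : ℝ) T,
              (eLpNorm (fun ω => Vm (Y s ω)) (ENNReal.ofReal (2 * p * α)) P) ^ α *
                eLpNorm (fun ω => F (Y s ω)) (ENNReal.ofReal (2 * p)) P) := by
  intro p hp t ht htT
  classical
  haveI : SecondCountableTopology H := UniformSpace.secondCountable_of_separable H
  haveI : SecondCountableTopology V := UniformSpace.secondCountable_of_separable V
  obtain ⟨hσ0, hσ1⟩ := hσ
  have hM0 : (0:ℝ) < (M:ℝ) := Nat.cast_pos.mpr hM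
  have hc0 : 0 < T / (M:ℝ) := div_pos hT hM0
  set c : ℝ := T / (M:ℝ) with hcdef
  have hp0 : (0:ℝ) < p := lt_of_lt_of_le one_pos hp
  set q : ℝ≥0∞ := ENNReal.ofReal p with hqdef
  have hq1 : 1 ≤ q := ENNReal.one_le_ofReal.mpr hp
  -- the two integrands
  set g : ℝ → Ω → V := fun s ω => E (t - s) (F (Y (hfloor c s) ω)) with hgdef
  set g' : ℝ → Ω → V := fun s ω => S (hfloor c s) t
    (if Vm (Y (hfloor c s) ω) ≤ (M : ℝ) / T then F (Y (hfloor c s) ω) else 0) with hg'def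
  -- measurability of hfloor
  have hfloorm : Measurable fun s : ℝ => hfloor c s := by
    unfold hfloor
    exact measurable_const.mul
      ((measurable_from_top (f := fun k : ℤ => (k:ℝ))).comp
        (Int.measurable_floor.comp (measurable_id.div_const c)))
  -- joint measurability pieces
  have hYj : Measurable fun z : ℝ × Ω => Y (hfloor c z.1) z.2 := by
    have h1 : Measurable fun z : Ω × ℤ => Y (c * (z.2:ℝ)) z.1 :=
      measurable_from_prod_countable_left fun k => (hYsm (c * (k:ℝ))).measurable
    have h2 : Measurable fun z : ℝ × Ω => (z.2, (⌊z.1 / c⌋ : ℤ)) :=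
      measurable_snd.prodMk (Int.measurable_floor.comp (measurable_fst.div_const c))
    exact h1.comp h2
  have hxj : Measurable fun z : ℝ × Ω => F (Y (hfloor c z.1) z.2) := hFm.comp hYj
  have hEj : Measurable (Function.uncurry fun (x : H) (r : ℝ) => E r x) :=
    measurable_uncurry_of_continuous_of_measurable
      (fun r => (E r).continuous) hEm
  have hSj : Measurable (Function.uncurry fun (x : H) (pr : ℝ × ℝ) => S pr.1 pr.2 x) :=
    measurable_uncurry_of_continuous_of_measurable
      (fun pr => (S pr.1 pr.2).continuous) hSm
  have hgj : Measurable (Function.uncurry g) := by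
    have : (Function.uncurry g) = (Function.uncurry fun (x : H) (r : ℝ) => E r x) ∘
        (fun z : ℝ × Ω => (F (Y (hfloor c z.1) z.2), t - z.1)) := rfl
    rw [this]
    exact hEj.comp (hxj.prodMk (measurable_const.sub measurable_fst))
  have hindj : Measurable fun z : ℝ × Ω =>
      (if Vm (Y (hfloor c z.1) z.2) ≤ (M : ℝ) / T then F (Y (hfloor c z.1) z.2) else 0 : H) :=
    Measurable.ite (measurableSet_le (hVmm.comp hYj) measurable_const) hxj measurable_const
  have hg'j : Measurable (Function.uncurry g') := by
    have : (Function.uncurry g') = (Function.uncurry fun (x : H) (pr : ℝ × ℝ) => S pr.1 pr.2 x) ∘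
        (fun z : ℝ × Ω =>
          ((if Vm (Y (hfloor c z.1) z.2) ≤ (M : ℝ) / T then F (Y (hfloor c z.1) z.2) else 0 : H),
            (hfloor c z.1, t))) := rfl
    rw [this]
    exact hSj.comp (hindj.prodMk ((hfloorm.comp measurable_fst).prodMk measurable_const))
  have hdiffj : Measurable (Function.uncurry fun s ω => g s ω - g' s ω) := hgj.sub hg'j
  -- rewrite the difference of integrals as integral of difference
  have hrw : (fun ω => (∫ s in Set.Ioc (0:ℝ) t, g s ω) - ∫ s in Set.Ioc (0:ℝ) t, g' s ω)
      = fun ω => ∫ s in Set.Ioc (0:ℝ) t, (g s ω - g' s ω) :=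
    funext fun ω => (integral_sub (hYXint ω t ht htT) (hYOint ω t ht htT)).symm
  -- abbreviations for the suprema
  set K1 : ℝ≥0∞ := ⨆ s ∈ Set.Ico (0:ℝ) T, eLpNorm (fun ω => F (Y s ω)) q P with hK1def
  set Es : ℝ≥0∞ := ⨆ s ∈ Set.Ioo (0:ℝ) T, ENNReal.ofReal (s ^ σ * ‖E s‖) with hEsdef
  set K2 : ℝ≥0∞ := ⨆ s ∈ Set.Ico (0:ℝ) T,
      (eLpNorm (fun ω => Vm (Y s ω)) (ENNReal.ofReal (2 * p * α)) P) ^ α *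
        eLpNorm (fun ω => F (Y s ω)) (ENNReal.ofReal (2 * p)) P with hK2def
  set C2 : ℝ≥0∞ := Es * (ENNReal.ofReal (c^α) * K2) with hC2def
  set B1 : ℝ → ℝ≥0∞ := fun s => ENNReal.ofReal ‖E (t-s) - S (hfloor c s) t‖ * K1 with hB1def
  set B2 : ℝ → ℝ≥0∞ := fun s => ENNReal.ofReal ((t-s)^(-σ)) * C2 with hB2def
  -- key pointwise (in s) bound
  have keybound : ∀ s ∈ Set.Ioo (0:ℝ) t,
      eLpNorm (fun ω => g s ω - g' s ω) q P ≤ B1 s + B2 s := by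
    intro s hs
    have hr0 : 0 ≤ hfloor c s := by
      unfold hfloor
      exact mul_nonneg hc0.le
        (by exact_mod_cast Int.floor_nonneg.mpr (div_nonneg hs.1.le hc0.le))
    have hrle : hfloor c s ≤ s := by
      unfold hfloor
      calc c * (⌊s / c⌋ : ℝ) ≤ c * (s / c) :=
            mul_le_mul_of_nonneg_left (Int.floor_le _) hc0.le
        _ = s := by rw [mul_comm, div_mul_cancel₀ s hc0.ne']
    have hrT : hfloor c s ∈ Set.Ico (0:ℝ) T :=
      ⟨hr0, lt_of_le_of_lt hrle (lt_of_lt_of_le hs.2 htT)⟩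
    have hYr : Measurable fun ω => Y (hfloor c s) ω := (hYsm _).measurable
    have hxm : Measurable fun ω => F (Y (hfloor c s) ω) := hFm.comp hYr
    have hindset : MeasurableSet {ω | Vm (Y (hfloor c s) ω) ≤ (M:ℝ)/T} :=
      measurableSet_le (hVmm.comp hYr) measurable_const
    set u1 : Ω → V := fun ω => (E (t-s) - S (hfloor c s) t)
      (if Vm (Y (hfloor c s) ω) ≤ (M:ℝ)/T then F (Y (hfloor c s) ω) else 0) with hu1def
    set u2 : Ω → V := fun ω => E (t-s)
      (if Vm (Y (hfloor c s) ω) ≤ (M:ℝ)/T then (0:H) else F (Y (hfloor c s) ω)) with hu2def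
    have hdecomp : (fun ω => g s ω - g' s ω) = fun ω => u1 ω + u2 ω := by
      funext ω
      by_cases hi : Vm (Y (hfloor c s) ω) ≤ (M:ℝ)/T <;>
        simp [hu1def, hu2def, hgdef, hg'def, hi, ContinuousLinearMap.sub_apply, map_zero]
    have hitem : Measurable fun ω =>
        (if Vm (Y (hfloor c s) ω) ≤ (M:ℝ)/T then F (Y (hfloor c s) ω) else (0:H)) :=
      Measurable.ite hindset hxm measurable_const
    have hitem2 : Measurable fun ω =>
        (if Vm (Y (hfloor c s) ω) ≤ (M:ℝ)/T then (0:H) else F (Y (hfloor c s) ω)) :=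
      Measurable.ite hindset measurable_const hxm
    have hu1m : AEStronglyMeasurable u1 P :=
      (((E (t-s) - S (hfloor c s) t).continuous.measurable).comp hitem).aestronglyMeasurable
    have hu2m : AEStronglyMeasurable u2 P :=
      (((E (t-s)).continuous.measurable).comp hitem2).aestronglyMeasurable
    rw [hdecomp]
    refine le_trans (eLpNorm_add_le hu1m hu2m hq1) (add_le_add ?_ ?_)
    · -- term 1
      have hmono : eLpNorm u1 q P ≤
          eLpNorm (fun ω => ‖E (t-s) - S (hfloor c s) t‖ * ‖F (Y (hfloor c s) ω)‖) q P := by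
        apply eLpNorm_mono
        intro ω
        rw [Real.norm_eq_abs, abs_of_nonneg (by positivity)]
        refine le_trans (ContinuousLinearMap.le_opNorm _ _) ?_
        refine mul_le_mul_of_nonneg_left ?_ (norm_nonneg _)
        split_ifs
        · exact le_rfl
        · simp
      have hsmul : eLpNorm (fun ω => ‖E (t-s) - S (hfloor c s) t‖ * ‖F (Y (hfloor c s) ω)‖) q P
          = ENNReal.ofReal ‖E (t-s) - S (hfloor c s) t‖ *
              eLpNorm (fun ω => F (Y (hfloor c s) ω)) q P := by
        rw [show (fun ω => ‖E (t-s) - S (hfloor c s) t‖ * ‖F (Y (hfloor c s) ω)‖)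
            = (‖E (t-s) - S (hfloor c s) t‖) • (fun ω => ‖F (Y (hfloor c s) ω)‖) from rfl]
        rw [eLpNorm_const_smul, eLpNorm_norm]
        congr 1
        exact Real.enorm_eq_ofReal (norm_nonneg _)
      calc eLpNorm u1 q P
          ≤ ENNReal.ofReal ‖E (t-s) - S (hfloor c s) t‖ *
              eLpNorm (fun ω => F (Y (hfloor c s) ω)) q P := hsmul ▸ hmono
        _ ≤ B1 s := by
            simp only [hB1def, hK1def]
            exact mul_le_mul' le_rfl
              (le_biSup (fun u => eLpNorm (fun ω => F (Y u ω)) q P) hrT)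
    · -- term 2
      set w : Ω → ℝ := fun ω => (c * Vm (Y (hfloor c s) ω))^α * ‖F (Y (hfloor c s) ω)‖ with hwdef
      have hw0 : ∀ ω, 0 ≤ w ω := fun ω =>
        mul_nonneg (Real.rpow_nonneg (mul_nonneg hc0.le (hVm0 _)) _) (norm_nonneg _)
      have hmono2 : eLpNorm u2 q P ≤ eLpNorm (fun ω => ‖E (t-s)‖ * w ω) q P := by
        apply eLpNorm_mono
        intro ω
        rw [Real.norm_eq_abs, abs_of_nonneg (mul_nonneg (norm_nonneg _) (hw0 ω))]
        refine le_trans (ContinuousLinearMap.le_opNorm _ _) ?_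
        refine mul_le_mul_of_nonneg_left ?_ (norm_nonneg _)
        split_ifs with hi
        · simpa using hw0 ω
        · have hgt : (M:ℝ)/T < Vm (Y (hfloor c s) ω) := not_le.mp hi
          have h1 : c * ((M:ℝ)/T) = 1 := by
            rw [hcdef]; field_simp
          have hbase : 1 ≤ c * Vm (Y (hfloor c s) ω) := by
            calc (1:ℝ) = c * ((M:ℝ)/T) := h1.symm
              _ ≤ c * Vm (Y (hfloor c s) ω) := mul_le_mul_of_nonneg_left hgt.le hc0.le
          calc ‖F (Y (hfloor c s) ω)‖ = 1 * ‖F (Y (hfloor c s) ω)‖ := (one_mul _).symm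
            _ ≤ w ω := mul_le_mul_of_nonneg_right (Real.one_le_rpow hbase hα.le) (norm_nonneg _)
      have hsmul2 : eLpNorm (fun ω => ‖E (t-s)‖ * w ω) q P
          = ENNReal.ofReal ‖E (t-s)‖ * eLpNorm w q P := by
        rw [show (fun ω => ‖E (t-s)‖ * w ω) = (‖E (t-s)‖) • w from rfl, eLpNorm_const_smul]
        congr 1
        exact Real.enorm_eq_ofReal (norm_nonneg _)
      have hwsplit : w = fun ω =>
          (c^α) * ((Vm (Y (hfloor c s) ω))^α * ‖F (Y (hfloor c s) ω)‖) := by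
        funext ω
        simp only [hwdef]
        rw [Real.mul_rpow hc0.le (hVm0 _)]
        ring
      have hw2 : eLpNorm w q P = ENNReal.ofReal (c^α) *
          eLpNorm (fun ω => (Vm (Y (hfloor c s) ω))^α * ‖F (Y (hfloor c s) ω)‖) q P := by
        rw [hwsplit]
        rw [show (fun ω => (c^α) * ((Vm (Y (hfloor c s) ω))^α * ‖F (Y (hfloor c s) ω)‖))
            = (c^α) • (fun ω => (Vm (Y (hfloor c s) ω))^α * ‖F (Y (hfloor c s) ω)‖) from rfl]
        rw [eLpNorm_const_smul]
        congr 1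
        exact Real.enorm_eq_ofReal (Real.rpow_nonneg hc0.le _)
      set q2 : ℝ≥0∞ := ENNReal.ofReal (2*p) with hq2def
      have hq2 : q2 = 2 * q := by
        rw [hq2def, hqdef, ENNReal.ofReal_mul (by norm_num : (0:ℝ) ≤ 2)]
        norm_num
      have hpqr : 1/q = 1/q2 + 1/q2 := by
        have h2q : ((2:ℝ≥0∞)*q)⁻¹ + (2*q)⁻¹ = q⁻¹ := by
          rw [ENNReal.mul_inv (Or.inl two_ne_zero) (Or.inl ENNReal.ofNat_ne_top),
            ← add_mul, ENNReal.inv_two_add_inv_two, one_mul]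
        simp only [one_div, hq2]
        exact h2q.symm
      have hφm : AEStronglyMeasurable (fun ω => (Vm (Y (hfloor c s) ω))^α) P :=
        ((Real.continuous_rpow_const hα.le).measurable.comp
          (hVmm.comp hYr)).aestronglyMeasurable
      have hfm2 : AEStronglyMeasurable (fun ω => ‖F (Y (hfloor c s) ω)‖) P :=
        hxm.norm.aestronglyMeasurable
      have hHold : eLpNorm (fun ω => (Vm (Y (hfloor c s) ω))^α * ‖F (Y (hfloor c s) ω)‖) q P ≤
          eLpNorm (fun ω => (Vm (Y (hfloor c s) ω))^α) q2 P *
            eLpNorm (fun ω => ‖F (Y (hfloor c s) ω)‖) q2 P :=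
        haveI : ENNReal.HolderTriple q2 q2 q := ⟨by simpa only [one_div] using hpqr.symm⟩
        eLpNorm_smul_le_mul_eLpNorm (𝕜 := ℝ) (E := ℝ) (μ := P)
          (f := fun ω => ‖F (Y (hfloor c s) ω)‖)
          (φ := fun ω => (Vm (Y (hfloor c s) ω))^α)
          (p := q2) (q := q2) (r := q) hfm2 hφm
      have hVα : eLpNorm (fun ω => (Vm (Y (hfloor c s) ω))^α) q2 P
          = (eLpNorm (fun ω => Vm (Y (hfloor c s) ω)) (ENNReal.ofReal (2*p*α)) P)^α := by
        have h1 : (fun ω => (Vm (Y (hfloor c s) ω))^α)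
            = fun ω => ‖Vm (Y (hfloor c s) ω)‖^α := by
          funext ω; rw [Real.norm_of_nonneg (hVm0 _)]
        rw [h1, eLpNorm_norm_rpow _ hα]
        congr 2
        rw [hq2def, ← ENNReal.ofReal_mul (by positivity)]
      have hnF : eLpNorm (fun ω => ‖F (Y (hfloor c s) ω)‖) q2 P
          = eLpNorm (fun ω => F (Y (hfloor c s) ω)) q2 P := eLpNorm_norm _
      have hts : t - s ∈ Set.Ioo (0:ℝ) T := ⟨by linarith [hs.2], by linarith [hs.1]⟩
      have hEbd : ENNReal.ofReal ‖E (t-s)‖ ≤ ENNReal.ofReal ((t-s)^(-σ)) * Es := by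
        have hsplitE : ‖E (t-s)‖ = (t-s)^(-σ) * ((t-s)^σ * ‖E (t-s)‖) := by
          rw [← mul_assoc, ← Real.rpow_add hts.1]
          norm_num
        rw [hsplitE, ENNReal.ofReal_mul (Real.rpow_nonneg hts.1.le _)]
        simp only [hEsdef]
        exact mul_le_mul' le_rfl
          (le_biSup (fun u => ENNReal.ofReal (u ^ σ * ‖E u‖)) hts)
      calc eLpNorm u2 q P ≤ ENNReal.ofReal ‖E (t-s)‖ * eLpNorm w q P := hsmul2 ▸ hmono2
        _ ≤ (ENNReal.ofReal ((t-s)^(-σ)) * Es) * (ENNReal.ofReal (c^α) *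
            ((eLpNorm (fun ω => Vm (Y (hfloor c s) ω)) (ENNReal.ofReal (2*p*α)) P)^α *
              eLpNorm (fun ω => F (Y (hfloor c s) ω)) q2 P)) := by
          refine mul_le_mul' hEbd ?_
          rw [hw2]
          refine mul_le_mul' le_rfl ?_
          calc eLpNorm (fun ω => (Vm (Y (hfloor c s) ω))^α * ‖F (Y (hfloor c s) ω)‖) q P
              ≤ _ := hHold
            _ = _ := by rw [hVα, hnF]
        _ ≤ (ENNReal.ofReal ((t-s)^(-σ)) * Es) * (ENNReal.ofReal (c^α) * K2) := by
          refine mul_le_mul' le_rfl (mul_le_mul' le_rfl ?_)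
          simp only [hK2def]
          exact le_biSup (fun u => (eLpNorm (fun ω => Vm (Y u ω)) (ENNReal.ofReal (2*p*α)) P)^α *
            eLpNorm (fun ω => F (Y u ω)) (ENNReal.ofReal (2*p)) P) hrT
        _ = B2 s := by simp only [hB2def, hC2def]; ring
  -- integrability of the singular weight
  have hintw : IntegrableOn (fun s => (t-s)^(-σ)) (Set.Ioc 0 t) := by
    have h1 : IntervalIntegrable (fun u : ℝ => u^(-σ)) volume 0 t :=
      intervalIntegral.intervalIntegrable_rpow' (by linarith)
    have h2 := (h1.comp_sub_left t)
    rw [show t - 0 = t by ring, sub_self] at h2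
    rw [← intervalIntegrable_iff_integrableOn_Ioc_of_le ht.le]
    exact h2.symm
  have hwval : ∫⁻ s in Set.Ioc (0:ℝ) t, ENNReal.ofReal ((t-s)^(-σ))
      ≤ ENNReal.ofReal (T^(1-σ)/(1-σ)) := by
    have hnn : 0 ≤ᵐ[volume.restrict (Set.Ioc (0:ℝ) t)] fun s => (t-s)^(-σ) := by
      filter_upwards [ae_restrict_mem measurableSet_Ioc] with s hs
      exact Real.rpow_nonneg (by linarith [hs.2]) _
    rw [← MeasureTheory.ofReal_integral_eq_lintegral_ofReal hintw hnn]
    apply ENNReal.ofReal_le_ofReal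
    have heq1 : ∫ s in Set.Ioc (0:ℝ) t, (t-s)^(-σ) = ∫ u in (0:ℝ)..t, u^(-σ) := by
      rw [← intervalIntegral.integral_of_le ht.le,
        intervalIntegral.integral_comp_sub_left (fun u : ℝ => u^(-σ)) t]
      rw [sub_self, sub_zero]
    rw [heq1, integral_rpow (Or.inl (by linarith : (-1:ℝ) < -σ))]
    rw [Real.zero_rpow (by linarith : -σ + 1 ≠ 0), sub_zero]
    have h1σ : -σ + 1 = 1 - σ := by ring
    rw [h1σ]
    gcongr <;> linarith
  -- B1 is measurable
  have hB1m : Measurable B1 := by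
    apply Measurable.mul_const
    apply Measurable.ennreal_ofReal
    apply measurable_opNorm_family' (fun s => E (t-s) - S (hfloor c s) t)
    intro x
    simp only [ContinuousLinearMap.sub_apply]
    exact ((hEm x).comp (measurable_const.sub measurable_id)).sub
      ((hSm x).comp (hfloorm.prodMk measurable_const))
  -- main chain
  rw [hrw]
  calc eLpNorm (fun ω => ∫ s in Set.Ioc (0:ℝ) t, (g s ω - g' s ω)) q P
      ≤ ∫⁻ s in Set.Ioc (0:ℝ) t, eLpNorm (fun ω => g s ω - g' s ω) q P :=
        eLpNorm_integral_le_lintegral_eLpNorm' hp hdiffj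
    _ ≤ ∫⁻ s in Set.Ioc (0:ℝ) t, (B1 s + B2 s) := by
        refine lintegral_mono_ae ?_
        have h1 : ∀ᵐ s ∂(volume.restrict (Set.Ioc (0:ℝ) t)), s ∈ Set.Ioc (0:ℝ) t :=
          ae_restrict_mem measurableSet_Ioc
        have h2 : ∀ᵐ s : ℝ ∂(volume.restrict (Set.Ioc (0:ℝ) t)), s ≠ t := by
          refine ae_restrict_of_ae ?_
          rw [ae_iff]
          have : {a : ℝ | ¬ a ≠ t} = {t} := by ext a; simp
          rw [this]
          exact measure_singleton t
        filter_upwards [h1, h2] with s hs hst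
        exact keybound s ⟨hs.1, lt_of_le_of_ne hs.2 hst⟩
    _ = (∫⁻ s in Set.Ioc (0:ℝ) t, B1 s) + ∫⁻ s in Set.Ioc (0:ℝ) t, B2 s :=
        lintegral_add_left hB1m _
    _ ≤ (∫⁻ s in Set.Ioc (0:ℝ) t,
            ENNReal.ofReal ‖E (t - s) - S (hfloor c s) t‖) * K1 +
          ENNReal.ofReal (T ^ (1 + α - σ) / ((1 - σ) * (M : ℝ) ^ α)) * Es * K2 := by
        gcongr
        · rw [hB1def]
          rw [lintegral_mul_const K1 (by
            apply Measurable.ennreal_ofReal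
            apply measurable_opNorm_family' (fun s => E (t-s) - S (hfloor c s) t)
            intro x
            simp only [ContinuousLinearMap.sub_apply]
            exact ((hEm x).comp (measurable_const.sub measurable_id)).sub
              ((hSm x).comp (hfloorm.prodMk measurable_const)))]
        · -- second term
          have haem : AEMeasurable (fun s => ENNReal.ofReal ((t-s)^(-σ)))
              (volume.restrict (Set.Ioc (0:ℝ) t)) :=
            ENNReal.measurable_ofReal.comp_aemeasurable hintw.1.aemeasurable
          rw [hB2def]
          calc ∫⁻ s in Set.Ioc (0:ℝ) t, ENNReal.ofReal ((t-s)^(-σ)) * C2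
              = (∫⁻ s in Set.Ioc (0:ℝ) t, ENNReal.ofReal ((t-s)^(-σ))) * C2 :=
                lintegral_mul_const'' C2 haem
            _ ≤ ENNReal.ofReal (T^(1-σ)/(1-σ)) * C2 := mul_le_mul' hwval le_rfl
            _ = ENNReal.ofReal (T ^ (1 + α - σ) / ((1 - σ) * (M : ℝ) ^ α)) * Es * K2 := by
                have hofr : ENNReal.ofReal (T^(1-σ)/(1-σ)) * ENNReal.ofReal (c^α)
                    = ENNReal.ofReal (T ^ (1 + α - σ) / ((1 - σ) * (M : ℝ) ^ α)) := by
                  rw [← ENNReal.ofReal_mul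
                    (div_nonneg (Real.rpow_nonneg hT.le _) (by linarith))]
                  congr 1
                  rw [hcdef, Real.div_rpow hT.le hM0.le, div_mul_div_comm, ← Real.rpow_add hT]
                  congr 2
                  ring
                calc ENNReal.ofReal (T^(1-σ)/(1-σ)) * C2
                    = (ENNReal.ofReal (T^(1-σ)/(1-σ)) * ENNReal.ofReal (c^α)) * Es * K2 := by
                      rw [hC2def]; ring
                  _ = ENNReal.ofReal (T ^ (1 + α - σ) / ((1 - σ) * (M : ℝ) ^ α)) * Es * K2 := by
                      rw [hofr]
end

section
/- Let q ∈ {2n, 2n+2, 2n+4, …} and let v, w : D → ℝ be measurable with ‖v‖_{L^{nq}} < ∞ and ‖w‖_{L^{nq}} < ∞. Then ‖F̂(v+w)‖_{L²} ≤ 2^{n+1} · sqrt(max{1, λ_D(D)}) · ( max_{k∈{0,1,…,n}} |a_k| ) · ( 1 + ‖v‖_{L^q}^{q/2} + ‖w‖_{L^q}^{q/2} ). (Lemma 6.6 of the paper: growth bound for the polynomial nonlinearity.) -/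
open MeasureTheory
open scoped ENNReal

/-- The open box `D = (b1, b2)^d ⊆ ℝ^d`. -/
def box (d : ℕ) (b1 b2 : ℝ) : Set (Fin d → ℝ) :=
  Set.univ.pi fun _ => Set.Ioo b1 b2

/-- The `L^r(λ_D; ℝ)`-norm (as a real number, `∞` being sent to `0` by `toReal`;
all norms appearing below are finite under the stated hypotheses). -/
noncomputable def lpN (d : ℕ) (b1 b2 : ℝ) (r : ℝ) (u : (Fin d → ℝ) → ℝ) : ℝ :=
  (eLpNorm u (ENNReal.ofReal r) (volume.restrict (box d b1 b2))).toReal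

/-- The polynomial Nemytskii operation `F̂(u) = Σ_{k=0}^n a_k u^k` (pointwise). -/
noncomputable def Fpoly (d n : ℕ) (a : ℕ → ℝ) (u : (Fin d → ℝ) → ℝ) :
    (Fin d → ℝ) → ℝ :=
  fun x => ∑ k ∈ Finset.range (n + 1), a k * u x ^ k

private lemma sum_pow_le_aux (n m : ℕ) (t : ℝ) (ht : 0 ≤ t) :
    ∑ k ∈ Finset.range (n + 1), t ^ k ≤ (2 ^ (n + 1) - 1) + 2 / 2 ^ m * t ^ (n + m) := by
  rcases le_total t 2 with h | h
  · have h1 : ∑ k ∈ Finset.range (n + 1), t ^ k ≤ ∑ k ∈ Finset.range (n + 1), (2:ℝ) ^ k :=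
      Finset.sum_le_sum fun k _ => pow_le_pow_left₀ ht h k
    have h2 : ∑ k ∈ Finset.range (n + 1), (2:ℝ) ^ k = 2 ^ (n+1) - 1 := by
      rw [geom_sum_eq (by norm_num)]; norm_num
    have h3 : 0 ≤ 2 / 2 ^ m * t ^ (n + m) := by positivity
    linarith
  · have ht1 : (1:ℝ) < t := by linarith
    have h1 : ∑ k ∈ Finset.range (n + 1), t ^ k = (t ^ (n+1) - 1) / (t - 1) :=
      geom_sum_eq (by linarith) _
    have h2 : (t ^ (n+1) - 1) / (t - 1) ≤ 2 * t ^ n := by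
      rw [div_le_iff₀ (by linarith)]
      have he : t ^ (n+1) = t ^ n * t := pow_succ t n
      nlinarith [pow_nonneg ht n]
    have h3 : 2 * t ^ n ≤ 2 / 2 ^ m * t ^ (n + m) := by
      rw [pow_add, div_mul_eq_mul_div, le_div_iff₀ (by positivity)]
      have h4 : (2:ℝ) ^ m ≤ t ^ m := pow_le_pow_left₀ (by norm_num) h m
      nlinarith [pow_nonneg ht n]
    have h4 : (0:ℝ) ≤ 2 ^ (n+1) - 1 := by
      have : (1:ℝ) ≤ 2 ^ (n+1) := one_le_pow₀ (by norm_num)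
      linarith
    linarith

private lemma add_pow_le_aux (X Y : ℝ) (hX : 0 ≤ X) (hY : 0 ≤ Y) (N : ℕ) :
    (X + Y) ^ N ≤ 2 ^ N * (X ^ N + Y ^ N) := by
  have h2 : ∀ Z W : ℝ, 0 ≤ Z → Z ≤ W → (Z + W) ^ N ≤ 2 ^ N * (Z ^ N + W ^ N) := by
    intro Z W hZ h
    calc (Z + W) ^ N ≤ (2 * W) ^ N := pow_le_pow_left₀ (by linarith) (by linarith) N
      _ = 2 ^ N * W ^ N := mul_pow _ _ _
      _ ≤ 2 ^ N * (Z ^ N + W ^ N) := by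
          nlinarith [pow_nonneg hZ N, pow_nonneg (show (0:ℝ) ≤ 2 by norm_num) N]
  rcases le_total X Y with h | h
  · exact h2 X Y hX h
  · have := h2 Y X hY h
    calc (X+Y)^N = (Y+X)^N := by ring_nf
      _ ≤ 2^N*(Y^N+X^N) := this
      _ = 2^N*(X^N+Y^N) := by ring

set_option maxHeartbeats 1000000 in
theorem stmt10
    (T : ℝ) (hT : 0 < T) (d : ℕ) (hd : 0 < d) (n : ℕ) (hn : Odd n)
    (a : ℕ → ℝ) (han : a n < 0) (b1 b2 : ℝ) (hb : b1 < b2)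
    (q : ℕ) (hq : ∃ m : ℕ, q = 2 * n + 2 * m)
    (v w : (Fin d → ℝ) → ℝ) (hvm : Measurable v) (hwm : Measurable w)
    (hv : eLpNorm v (ENNReal.ofReal ((n : ℝ) * q)) (volume.restrict (box d b1 b2)) < ⊤)
    (hw : eLpNorm w (ENNReal.ofReal ((n : ℝ) * q)) (volume.restrict (box d b1 b2)) < ⊤) :
    lpN d b1 b2 2 (Fpoly d n a (fun y => v y + w y)) ≤
      2 ^ (n + 1) * Real.sqrt (max 1 (volume (box d b1 b2)).toReal) *
        ((Finset.range (n + 1)).sup' Finset.nonempty_range_add_one fun k => |a k|) *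
        (1 + lpN d b1 b2 (q : ℝ) v ^ ((q : ℝ) / 2) +
          lpN d b1 b2 (q : ℝ) w ^ ((q : ℝ) / 2)) := by
  obtain ⟨m, hqm⟩ := hq
  have hn1 : 1 ≤ n := hn.pos
  set N := n + m with hN
  have hqN : q = 2 * N := by omega
  set μ := volume.restrict (box d b1 b2) with hμdef
  set M := (Finset.range (n + 1)).sup' Finset.nonempty_range_add_one (fun k => |a k|) with hM
  have hM0 : 0 ≤ M :=
    le_trans (abs_nonneg (a 0)) (Finset.le_sup' (fun k => |a k|) (Finset.mem_range.2 n.succ_pos))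
  have hak : ∀ k ∈ Finset.range (n+1), |a k| ≤ M := fun k hk => Finset.le_sup' (fun k => |a k|) hk
  set u := fun y => v y + w y with hu
  have hum : Measurable u := hvm.add hwm
  -- volume facts
  have hvol : volume (box d b1 b2) = ENNReal.ofReal (b2 - b1) ^ d := by
    simp [box, volume_pi_pi, Real.volume_Ioo]
  have hvolfin : volume (box d b1 b2) ≠ ⊤ := by
    rw [hvol]; exact (ENNReal.pow_lt_top ENNReal.ofReal_lt_top).ne
  have hvolpos : volume (box d b1 b2) ≠ 0 := by
    rw [hvol]
    exact pow_ne_zero _ (by simp [ENNReal.ofReal_eq_zero]; linarith)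
  have hμuniv : μ Set.univ = volume (box d b1 b2) := Measure.restrict_apply_univ _
  have hμne : μ ≠ 0 := by
    intro h; exact hvolpos (by rw [← hμuniv, h]; simp)
  -- exponent facts
  have hq2 : 2 ≤ q := by omega
  have hqpos : (0:ℝ) < (q:ℝ) := by exact_mod_cast (by omega : 0 < q)
  have hp2 : ENNReal.ofReal (2:ℝ) = (2:ℝ≥0∞) := by
    rw [ENNReal.ofReal_ofNat]
  have hpq1 : (1:ℝ≥0∞) ≤ ENNReal.ofReal (q:ℝ) := by
    rw [ENNReal.one_le_ofReal]
    exact_mod_cast (by omega : 1 ≤ q)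
  -- finiteness of the L^q norms
  have hfin : ∀ f : (Fin d → ℝ) → ℝ, Measurable f →
      eLpNorm f (ENNReal.ofReal ((n : ℝ) * q)) μ < ⊤ →
      eLpNorm f (ENNReal.ofReal (q:ℝ)) μ ≠ ⊤ := by
    intro f hfm hf
    have hle : ENNReal.ofReal (q:ℝ) ≤ ENNReal.ofReal ((n:ℝ)*q) := by
      apply ENNReal.ofReal_le_ofReal
      nlinarith [(show (1:ℝ) ≤ (n:ℝ) by exact_mod_cast hn1)]
    have h := eLpNorm_le_eLpNorm_mul_rpow_measure_univ (μ := μ) hle hfm.aestronglyMeasurable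
    refine (lt_of_le_of_lt h ?_).ne
    have hexp : 0 ≤ 1 / (ENNReal.ofReal (q:ℝ)).toReal - 1 / (ENNReal.ofReal ((n:ℝ)*q)).toReal := by
      rw [ENNReal.toReal_ofReal hqpos.le, ENNReal.toReal_ofReal (by nlinarith [(show (0:ℝ) ≤ (n:ℝ) by positivity)])]
      have h1 : (q:ℝ) ≤ (n:ℝ)*q := by nlinarith [(show (1:ℝ) ≤ (n:ℝ) by exact_mod_cast hn1)]
      have := one_div_le_one_div_of_le hqpos h1
      linarith
    refine ENNReal.mul_lt_top hf ?_
    exact ENNReal.rpow_lt_top_of_nonneg hexp (by rw [hμuniv]; exact hvolfin)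
  set Ev := eLpNorm v (ENNReal.ofReal (q:ℝ)) μ with hEvdef
  set Ew := eLpNorm w (ENNReal.ofReal (q:ℝ)) μ with hEwdef
  have hEv : Ev ≠ ⊤ := hfin v hvm hv
  have hEw : Ew ≠ ⊤ := hfin w hwm hw
  -- the pointwise bound
  set c1 : ℝ := M * (2 ^ (n+1) - 1) with hc1
  set c2 : ℝ := M * (2 / 2 ^ m) with hc2
  have h2n1 : (0:ℝ) ≤ 2 ^ (n+1) - 1 := by
    have : (1:ℝ) ≤ 2 ^ (n+1) := one_le_pow₀ (by norm_num)
    linarith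
  have hc10 : 0 ≤ c1 := mul_nonneg hM0 h2n1
  have hc20 : 0 ≤ c2 := mul_nonneg hM0 (by positivity)
  set g1 : (Fin d → ℝ) → ℝ := fun _ => c1 with hg1
  set g2 : (Fin d → ℝ) → ℝ := fun x => c2 * |u x| ^ N with hg2
  have hpt : ∀ x, ‖Fpoly d n a u x‖ ≤ (g1 + g2) x := by
    intro x
    simp only [Fpoly, Real.norm_eq_abs, Pi.add_apply, hg1, hg2]
    calc |∑ k ∈ Finset.range (n+1), a k * u x ^ k|
        ≤ ∑ k ∈ Finset.range (n+1), |a k * u x ^ k| := Finset.abs_sum_le_sum_abs _ _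
      _ ≤ ∑ k ∈ Finset.range (n+1), M * |u x| ^ k := by
          refine Finset.sum_le_sum fun k hk => ?_
          rw [abs_mul, abs_pow]
          exact mul_le_mul_of_nonneg_right (hak k hk) (by positivity)
      _ = M * ∑ k ∈ Finset.range (n+1), |u x| ^ k := (Finset.mul_sum _ _ _).symm
      _ ≤ M * ((2 ^ (n+1) - 1) + 2 / 2 ^ m * |u x| ^ (n+m)) :=
          mul_le_mul_of_nonneg_left (sum_pow_le_aux n m _ (abs_nonneg _)) hM0
      _ = c1 + c2 * |u x| ^ N := by rw [hc1, hc2]; ring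
  have hg2m : Measurable g2 := (hum.abs.pow_const N).const_mul c2
  have step1 : eLpNorm (Fpoly d n a u) (ENNReal.ofReal 2) μ
      ≤ eLpNorm (g1 + g2) (ENNReal.ofReal 2) μ := eLpNorm_mono_real hpt
  have step2 : eLpNorm (g1 + g2) (ENNReal.ofReal 2) μ ≤
      eLpNorm g1 (ENNReal.ofReal 2) μ + eLpNorm g2 (ENNReal.ofReal 2) μ :=
    eLpNorm_add_le aestronglyMeasurable_const hg2m.aestronglyMeasurable
      (by rw [hp2]; exact one_le_two)
  have hg1val : eLpNorm g1 (ENNReal.ofReal 2) μ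
      = ENNReal.ofReal c1 * μ Set.univ ^ ((1:ℝ)/2) := by
    rw [hg1, eLpNorm_const c1 (by rw [hp2]; norm_num) hμne]
    rw [Real.enorm_eq_ofReal hc10, hp2]
    norm_num
  have hg2eq : g2 = c2 • (fun x => ‖u x‖ ^ (N:ℝ)) := by
    funext x
    simp [hg2, Real.rpow_natCast, Real.norm_eq_abs]
  have hNpos : (0:ℝ) < (N:ℝ) := by exact_mod_cast (by omega : 0 < N)
  have hqq : (ENNReal.ofReal (2:ℝ)) * ENNReal.ofReal (N:ℝ) = ENNReal.ofReal (q:ℝ) := by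
    rw [← ENNReal.ofReal_mul (by norm_num)]
    congr 1
    rw [hqN]; push_cast; ring
  have hg2val : eLpNorm g2 (ENNReal.ofReal 2) μ
      = ENNReal.ofReal c2 * (eLpNorm u (ENNReal.ofReal (q:ℝ)) μ) ^ (N:ℝ) := by
    rw [hg2eq, eLpNorm_const_smul, eLpNorm_norm_rpow u hNpos, hqq,
      Real.enorm_eq_ofReal hc20]
  have hEu : eLpNorm u (ENNReal.ofReal (q:ℝ)) μ ≤ Ev + Ew :=
    eLpNorm_add_le hvm.aestronglyMeasurable hwm.aestronglyMeasurable hpq1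
  set K : ℝ≥0∞ := ENNReal.ofReal c1 * μ Set.univ ^ ((1:ℝ)/2)
      + ENNReal.ofReal c2 * (Ev + Ew) ^ (N:ℝ) with hK
  have hmain : eLpNorm (Fpoly d n a u) (ENNReal.ofReal 2) μ ≤ K := by
    refine le_trans step1 (le_trans step2 ?_)
    rw [hg1val, hg2val, hK]
    gcongr
  have hK1 : ENNReal.ofReal c1 * μ Set.univ ^ ((1:ℝ)/2) ≠ ⊤ :=
    ENNReal.mul_ne_top ENNReal.ofReal_ne_top
      (ENNReal.rpow_lt_top_of_nonneg (by norm_num) (by rw [hμuniv]; exact hvolfin)).ne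
  have hEvEw : Ev + Ew ≠ ⊤ := ENNReal.add_ne_top.2 ⟨hEv, hEw⟩
  have hK2 : ENNReal.ofReal c2 * (Ev + Ew) ^ (N:ℝ) ≠ ⊤ :=
    ENNReal.mul_ne_top ENNReal.ofReal_ne_top
      (ENNReal.rpow_lt_top_of_nonneg hNpos.le hEvEw).ne
  have hKfin : K ≠ ⊤ := by rw [hK]; exact ENNReal.add_ne_top.2 ⟨hK1, hK2⟩
  -- pass to real numbers
  set lam : ℝ := (volume (box d b1 b2)).toReal with hlam
  set X : ℝ := lpN d b1 b2 (q:ℝ) v with hX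
  set Y : ℝ := lpN d b1 b2 (q:ℝ) w with hY
  have hX0 : 0 ≤ X := ENNReal.toReal_nonneg
  have hY0 : 0 ≤ Y := ENNReal.toReal_nonneg
  have hlam0 : 0 ≤ lam := ENNReal.toReal_nonneg
  have hKval : K.toReal = c1 * Real.sqrt lam + c2 * (X + Y) ^ N := by
    rw [hK, ENNReal.toReal_add hK1 hK2, ENNReal.toReal_mul, ENNReal.toReal_mul,
      ENNReal.toReal_ofReal hc10, ENNReal.toReal_ofReal hc20,
      ← ENNReal.toReal_rpow, ← ENNReal.toReal_rpow, hμuniv,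
      ENNReal.toReal_add hEv hEw]
    rw [Real.rpow_natCast, Real.sqrt_eq_rpow]
    rfl
  have hlhs : lpN d b1 b2 2 (Fpoly d n a u) ≤ c1 * Real.sqrt lam + c2 * (X + Y) ^ N := by
    rw [← hKval]
    exact ENNReal.toReal_mono hKfin hmain
  -- final computation in ℝ
  set s : ℝ := Real.sqrt (max 1 lam) with hs
  have hs1 : (1:ℝ) ≤ s := by
    have h := Real.sqrt_le_sqrt (le_max_left 1 lam)
    rwa [Real.sqrt_one] at h
  have hsl : Real.sqrt lam ≤ s := Real.sqrt_le_sqrt (le_max_right _ _)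
  have hexpN : ((q:ℝ)/2) = (N:ℝ) := by rw [hqN]; push_cast; ring
  have hXq : X ^ ((q:ℝ)/2) = X ^ N := by rw [hexpN, Real.rpow_natCast]
  have hYq : Y ^ ((q:ℝ)/2) = Y ^ N := by rw [hexpN, Real.rpow_natCast]
  rw [hXq, hYq]
  have hc2N : c2 * 2 ^ N = M * 2 ^ (n+1) := by
    rw [hc2, hN, pow_add]
    field_simp
    ring
  have hs0 : 0 ≤ s := le_trans zero_le_one hs1
  have e1 : c1 * Real.sqrt lam ≤ M * 2 ^ (n+1) * s := by
    have h1 : c1 * Real.sqrt lam ≤ c1 * s := mul_le_mul_of_nonneg_left hsl hc10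
    have h2 : c1 ≤ M * 2 ^ (n+1) := by
      rw [hc1]
      exact mul_le_mul_of_nonneg_left (by linarith) hM0
    exact h1.trans (mul_le_mul_of_nonneg_right h2 hs0)
  have e2 : c2 * (X + Y) ^ N ≤ M * 2 ^ (n+1) * s * (X ^ N + Y ^ N) := by
    have hadd := add_pow_le_aux X Y hX0 hY0 N
    have hS0 : 0 ≤ X ^ N + Y ^ N := by positivity
    calc c2 * (X + Y) ^ N ≤ c2 * (2 ^ N * (X ^ N + Y ^ N)) :=
          mul_le_mul_of_nonneg_left hadd hc20
      _ = (c2 * 2 ^ N) * (X ^ N + Y ^ N) := by ring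
      _ = M * 2 ^ (n+1) * (X ^ N + Y ^ N) := by rw [hc2N]
      _ ≤ M * 2 ^ (n+1) * s * (X ^ N + Y ^ N) :=
          mul_le_mul_of_nonneg_right
            (le_mul_of_one_le_right (mul_nonneg hM0 (by positivity)) hs1) hS0
  calc lpN d b1 b2 2 (Fpoly d n a u) ≤ c1 * Real.sqrt lam + c2 * (X + Y) ^ N := hlhs
    _ ≤ M * 2 ^ (n+1) * s + M * 2 ^ (n+1) * s * (X ^ N + Y ^ N) := add_le_add e1 e2
    _ = 2 ^ (n+1) * s * M * (1 + X ^ N + Y ^ N) := by ring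
end

section
/- Let v, w : D → ℝ be measurable with ‖v‖_{L^{2n²}} < ∞ and ‖w‖_{L^{2n²}} < ∞. Then the function (v−w)·(F̂(v)−F̂(w)) is λ_D-integrable and ∫_D (v−w)(F̂(v)−F̂(w)) dλ_D ≤ (n−1) · max{1, |a_n|^{2−n}} · max{1, max_{k∈{0,1,…,n−1}} (k|a_k|)^{n−1}} · ‖v−w‖_{L²}². (This is the nonlinearity part of Lemma 6.7 of the paper; the full lemma adds the term ⟨v−w, A(v−w)⟩_{L²} ≤ 0 for the Dirichlet Laplacian A, which requires v−w in the domain of (−A)^{1/2}.) -/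
open MeasureTheory ENNReal

section aux

lemma young_aux {n k : ℕ} (hk1 : 1 ≤ k) (hkn : k < n) {b cc m B : ℝ}
    (hb : 0 ≤ b) (hcc : 0 < cc) (hm : 0 ≤ m) (hB : 1 ≤ B) (hbB : b ^ (n - 1) ≤ B) :
    b * m ^ (k - 1) ≤ cc * m ^ (n - 1) + max 1 (cc ^ ((2 : ℝ) - n)) * B := by
  have hA1 : (1:ℝ) ≤ max 1 (cc ^ ((2 : ℝ) - n)) := le_max_left _ _
  have hB0 : (0:ℝ) ≤ B := le_trans zero_le_one hB
  have hn2 : 2 ≤ n := hk1.trans_lt hkn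
  have hbleB : b ≤ B := by
    rcases le_total b 1 with h | h
    · linarith
    · calc b = b ^ 1 := (pow_one b).symm
        _ ≤ b ^ (n - 1) := pow_le_pow_right₀ h (by omega)
        _ ≤ B := hbB
  rcases eq_or_lt_of_le hk1 with hk1' | hk2
  · -- k = 1
    rw [← hk1']
    simp only [Nat.sub_self, pow_zero, mul_one]
    have h1 : (0:ℝ) ≤ cc * m ^ (n-1) := by positivity
    have h2 : B ≤ max 1 (cc ^ ((2 : ℝ) - n)) * B := le_mul_of_one_le_left hB0 hA1
    linarith
  · -- 2 ≤ k
    have hk2' : 2 ≤ k := hk2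
    rcases eq_or_lt_of_le hb with hb0 | hb0
    · rw [← hb0, zero_mul]; positivity
    rcases eq_or_lt_of_le hm with hm0 | hm0
    · rw [← hm0, zero_pow (by omega : k - 1 ≠ 0), mul_zero]; positivity
    have hn3 : 3 ≤ n := by omega
    have hkR : (k:ℝ) < (n:ℝ) := by exact_mod_cast hkn
    have hkR' : (k:ℝ) + 1 ≤ (n:ℝ) := by exact_mod_cast hkn
    have hnk : (0:ℝ) < (n:ℝ) - k := by linarith
    have hnk1 : (1:ℝ) ≤ (n:ℝ) - k := by linarith
    have hk1R : (2:ℝ) ≤ (k:ℝ) := by exact_mod_cast hk2'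
    have hn1 : (0:ℝ) < (n:ℝ) - 1 := by linarith
    have cast_n : ((n - 1 : ℕ) : ℝ) = (n:ℝ) - 1 := by
      rw [Nat.cast_sub (by omega : 1 ≤ n)]; simp
    have cast_k : ((k - 1 : ℕ) : ℝ) = (k:ℝ) - 1 := by
      rw [Nat.cast_sub (by omega : 1 ≤ k)]; simp
    set θ : ℝ := ((k:ℝ) - 1) / ((n:ℝ) - 1) with hθ
    have hθ0 : 0 ≤ θ := div_nonneg (by linarith) hn1.le
    have hθ1 : θ ≤ 1 := by rw [hθ, div_le_one hn1]; linarith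
    set p₁ : ℝ := cc * m ^ (n - 1) with hp₁
    set p₂ : ℝ := b ^ (((n:ℝ) - 1) / ((n:ℝ) - k)) * cc ^ (-(((k:ℝ) - 1) / ((n:ℝ) - k))) with hp₂
    have hp₁0 : 0 ≤ p₁ := by positivity
    have hp₂0 : 0 ≤ p₂ := by positivity
    have h1θ : 1 - θ = ((n:ℝ) - k) / ((n:ℝ) - 1) := by
      rw [hθ]; field_simp; ring
    have key : b * m ^ (k - 1) = p₁ ^ θ * p₂ ^ (1 - θ) := by
      have e1 : (((n:ℝ)-1)/((n:ℝ)-k)) * (1-θ) = 1 := by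
        rw [h1θ, div_mul_div_comm]
        rw [div_eq_one_iff_eq (by positivity)]
        ring
      have e2 : (-(((k:ℝ)-1)/((n:ℝ)-k))) * (1-θ) = -θ := by
        rw [h1θ, hθ, neg_mul, neg_inj, div_mul_div_comm]
        rw [div_eq_div_iff (by positivity) hn1.ne']
        ring
      have e3 : ((n-1:ℕ):ℝ) * θ = ((k-1:ℕ):ℝ) := by
        rw [cast_n, cast_k, hθ, mul_div_assoc', mul_comm, mul_div_assoc,
          div_self hn1.ne', mul_one]
      have hm1 : p₁ ^ θ = cc ^ θ * m ^ (k - 1 : ℕ) := by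
        rw [hp₁, Real.mul_rpow hcc.le (by positivity),
          ← Real.rpow_natCast m (n-1), ← Real.rpow_mul hm, e3, Real.rpow_natCast]
      have hm2 : p₂ ^ (1 - θ) = b * cc ^ (-θ) := by
        rw [hp₂, Real.mul_rpow (by positivity) (by positivity),
          ← Real.rpow_mul hb, ← Real.rpow_mul hcc.le, e1, e2, Real.rpow_one]
      have hcct : cc ^ θ * cc ^ (-θ) = 1 := by
        rw [← Real.rpow_add hcc]; simp
      calc b * m ^ (k-1) = (cc ^ θ * cc ^ (-θ)) * (b * m ^ (k-1:ℕ)) := by rw [hcct, one_mul]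
        _ = cc ^ θ * m ^ (k-1:ℕ) * (b * cc ^ (-θ)) := by ring
        _ = p₁ ^ θ * p₂ ^ (1-θ) := by rw [hm1, hm2]
    have young :=
      Real.geom_mean_le_arith_mean2_weighted hθ0 (by linarith : (0:ℝ) ≤ 1 - θ) hp₁0 hp₂0
        (by ring : θ + (1 - θ) = 1)
    have hp₂AB : p₂ ≤ max 1 (cc ^ ((2:ℝ)-n)) * B := by
      have hX : b ^ (((n:ℝ)-1)/((n:ℝ)-k)) ≤ B := by
        rcases le_total b 1 with h | h
        · exact le_trans (Real.rpow_le_one hb h (by positivity)) hB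
        · have hexp : ((n:ℝ)-1)/((n:ℝ)-k) ≤ (n:ℝ)-1 := by
            rw [div_le_iff₀ hnk]
            nlinarith
          have step1 : b ^ (((n:ℝ)-1)/((n:ℝ)-k)) ≤ b ^ ((n:ℝ)-1) :=
            Real.rpow_le_rpow_of_exponent_le h hexp
          have step2 : b ^ ((n:ℝ)-1) = b ^ (n-1:ℕ) := by
            rw [← cast_n, Real.rpow_natCast]
          rw [step2] at step1
          exact step1.trans hbB
      have hY : cc ^ (-(((k:ℝ)-1)/((n:ℝ)-k))) ≤ max 1 (cc ^ ((2:ℝ)-n)) := by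
        rcases le_total 1 cc with h | h
        · refine le_trans (Real.rpow_le_one_of_one_le_of_nonpos h ?_) (le_max_left _ _)
          rw [neg_nonpos]
          exact div_nonneg (by linarith) hnk.le
        · refine le_trans (Real.rpow_le_rpow_of_exponent_ge hcc h ?_) (le_max_right _ _)
          have h2 : ((k:ℝ)-1)/((n:ℝ)-k) ≤ (n:ℝ) - 2 := by
            rw [div_le_iff₀ hnk]
            nlinarith
          linarith
      calc p₂ ≤ B * max 1 (cc ^ ((2:ℝ)-n)) :=
            mul_le_mul hX hY (by positivity) hB0
        _ = max 1 (cc ^ ((2:ℝ)-n)) * B := mul_comm _ _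
    have h1 : θ * p₁ ≤ p₁ := mul_le_of_le_one_left hp₁0 hθ1
    have h2 : (1-θ) * p₂ ≤ p₂ := mul_le_of_le_one_left hp₂0 (by linarith)
    have hfin : b * m ^ (k-1) ≤ p₁ + p₂ := by
      rw [key]
      exact young.trans (by linarith)
    linarith [hfin, hp₂AB]


lemma deriv_bound {n : ℕ} (hn : Odd n) {a : ℕ → ℝ} (han : a n < 0) {B : ℝ} (hB : 1 ≤ B)
    (hbB : ∀ k, k < n → ((k:ℝ) * |a k|) ^ (n - 1) ≤ B) (t : ℝ) :
    ∑ k ∈ Finset.range (n + 1), a k * ((k : ℝ) * t ^ (k - 1)) ≤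
      ((n : ℝ) - 1) * (max 1 (|a n| ^ ((2 : ℝ) - n)) * B) := by
  obtain ⟨m, rfl⟩ : ∃ m, n = m + 1 := ⟨n - 1, by have := hn.pos; omega⟩
  set N := m + 1 with hN
  have hcc : (0:ℝ) < |a N| := abs_pos.2 han.ne
  have hu : (0:ℝ) ≤ |t| := abs_nonneg t
  have hev : Even (N - 1) := Nat.Odd.sub_odd hn odd_one
  have hlead : a N * ((N : ℝ) * t ^ (N - 1)) = -(|a N| * (N : ℝ) * |t| ^ (N - 1)) := by
    rw [hev.pow_abs, abs_of_neg han]; ring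
  have hsum : ∑ k ∈ Finset.range N, a k * ((k : ℝ) * t ^ (k - 1)) ≤
      (m : ℝ) * (|a N| * |t| ^ (N - 1) + max 1 (|a N| ^ ((2 : ℝ) - N)) * B) := by
    rw [Finset.sum_range_succ']
    have h0 : a 0 * ((0 : ℕ) * t ^ (0 - 1) : ℝ) = 0 := by simp
    have hterm : ∀ i ∈ Finset.range m,
        a (i + 1) * (((i + 1 : ℕ) : ℝ) * t ^ (i + 1 - 1)) ≤
          |a N| * |t| ^ (N - 1) + max 1 (|a N| ^ ((2 : ℝ) - N)) * B := by
      intro i hi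
      rw [Finset.mem_range] at hi
      have hb : (0:ℝ) ≤ ((i + 1 : ℕ) : ℝ) * |a (i + 1)| := by positivity
      have step := young_aux (k := i + 1) (n := N) (by omega) (by omega) hb hcc hu hB
        (hbB (i + 1) (by omega))
      calc a (i + 1) * (((i + 1 : ℕ) : ℝ) * t ^ (i + 1 - 1))
          ≤ |a (i + 1) * (((i + 1 : ℕ) : ℝ) * t ^ (i + 1 - 1))| := le_abs_self _
        _ = ((i + 1 : ℕ) : ℝ) * |a (i + 1)| * |t| ^ (i + 1 - 1) := by
            rw [abs_mul, abs_mul, abs_pow, Nat.abs_cast]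
            ring
        _ ≤ |a N| * |t| ^ (N - 1) + max 1 (|a N| ^ ((2 : ℝ) - N)) * B := step
    calc (∑ i ∈ Finset.range m, a (i + 1) * (((i + 1 : ℕ) : ℝ) * t ^ (i + 1 - 1)))
          + a 0 * ((0 : ℕ) * t ^ (0 - 1) : ℝ)
        = ∑ i ∈ Finset.range m, a (i + 1) * (((i + 1 : ℕ) : ℝ) * t ^ (i + 1 - 1)) := by
          rw [h0, add_zero]
      _ ≤ ∑ _i ∈ Finset.range m, (|a N| * |t| ^ (N - 1) + max 1 (|a N| ^ ((2 : ℝ) - N)) * B) :=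
          Finset.sum_le_sum hterm
      _ = (m : ℝ) * (|a N| * |t| ^ (N - 1) + max 1 (|a N| ^ ((2 : ℝ) - N)) * B) := by
          rw [Finset.sum_const, Finset.card_range, nsmul_eq_mul]
  have hNm : ((N : ℝ) - 1) = (m : ℝ) := by push_cast [hN]; ring
  have hAB0 : (0:ℝ) ≤ max 1 (|a N| ^ ((2 : ℝ) - N)) * B := by positivity
  have hpos : (0:ℝ) ≤ |a N| * |t| ^ (N - 1) := by positivity
  rw [Finset.sum_range_succ, hlead, hNm]
  have hNcast : (m : ℝ) ≤ (N : ℝ) := by push_cast [hN]; linarith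
  nlinarith [hsum, hpos, mul_nonneg (Nat.cast_nonneg m : (0:ℝ) ≤ m) hpos]


lemma pointwise_bound {n : ℕ} (hn : Odd n) {a : ℕ → ℝ} (han : a n < 0) {B : ℝ} (hB : 1 ≤ B)
    (hbB : ∀ k, k < n → ((k:ℝ) * |a k|) ^ (n - 1) ≤ B) (x y : ℝ) :
    (x - y) * ((∑ k ∈ Finset.range (n + 1), a k * x ^ k)
        - ∑ k ∈ Finset.range (n + 1), a k * y ^ k) ≤
      (((n : ℝ) - 1) * (max 1 (|a n| ^ ((2 : ℝ) - n)) * B)) * (x - y) ^ 2 := by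
  set c : ℝ := ((n : ℝ) - 1) * (max 1 (|a n| ^ ((2 : ℝ) - n)) * B) with hc
  set P : ℝ → ℝ := fun t => ∑ k ∈ Finset.range (n + 1), a k * t ^ k with hP
  have hderiv : ∀ t : ℝ, HasDerivAt P (∑ k ∈ Finset.range (n + 1), a k * ((k : ℝ) * t ^ (k - 1))) t := by
    intro t
    apply HasDerivAt.fun_sum
    intro k _
    exact (hasDerivAt_pow k t).const_mul (a k)
  have hg : ∀ t : ℝ, HasDerivAt (fun t : ℝ => c * t - P t)
      (c - ∑ k ∈ Finset.range (n + 1), a k * ((k : ℝ) * t ^ (k - 1))) t := by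
    intro t
    simpa using ((hasDerivAt_id t).const_mul c).fun_sub (hderiv t)
  have hmono : Monotone (fun t : ℝ => c * t - P t) := by
    apply monotone_of_deriv_nonneg
    · intro t
      exact (hg t).differentiableAt
    · intro t
      rw [(hg t).deriv]
      have := deriv_bound hn han hB hbB t
      rw [← hc] at this
      linarith
  rcases le_total y x with h | h
  · have h1 := hmono h
    simp only at h1
    have h2 : P x - P y ≤ c * (x - y) := by linarith
    have h3 := mul_le_mul_of_nonneg_left h2 (sub_nonneg.2 h)
    calc (x - y) * (P x - P y) ≤ (x - y) * (c * (x - y)) := h3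
      _ = c * (x - y) ^ 2 := by ring
  · have h1 := hmono h
    simp only at h1
    have h2 : P y - P x ≤ c * (y - x) := by linarith
    have h3 := mul_le_mul_of_nonneg_left h2 (sub_nonneg.2 h)
    calc (x - y) * (P x - P y) = (y - x) * (P y - P x) := by ring
      _ ≤ (y - x) * (c * (y - x)) := h3
      _ = c * (x - y) ^ 2 := by ring


lemma sq_integral_eq {α : Type*} [MeasurableSpace α] {μ : Measure α} {g : α → ℝ}
    (hg : MemLp g 2 μ) :
    ∫ x, g x ^ 2 ∂μ = (eLpNorm g 2 μ).toReal ^ 2 := by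
  set L : ℝ≥0∞ := ∫⁻ x, (‖g x‖₊ : ℝ≥0∞) ^ (2:ℝ) ∂μ with hLdef
  have hL : eLpNorm g 2 μ = L ^ (1/2 : ℝ) := by
    rw [eLpNorm_eq_lintegral_rpow_enorm_toReal two_ne_zero ENNReal.ofNat_ne_top]
    have h2 : (2:ℝ≥0∞).toReal = (2:ℝ) := by norm_num
    rw [h2]
    rfl
  have hLne : L ≠ ⊤ := by
    intro hLtop
    have h1 := hg.eLpNorm_lt_top
    rw [hL, hLtop, ENNReal.top_rpow_of_pos (by norm_num)] at h1
    exact (lt_irrefl _ h1)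
  have hptw : ∀ x, ENNReal.ofReal (g x ^ 2) = (‖g x‖₊ : ℝ≥0∞) ^ (2:ℝ) := by
    intro x
    rw [← enorm_eq_nnnorm, Real.enorm_eq_ofReal_abs]
    calc ENNReal.ofReal (g x ^ 2) = ENNReal.ofReal (|g x| ^ 2) := by rw [sq_abs]
      _ = (ENNReal.ofReal |g x|) ^ (2:ℕ) := ENNReal.ofReal_pow (abs_nonneg _) 2
      _ = (ENNReal.ofReal |g x|) ^ ((2:ℕ):ℝ) := (ENNReal.rpow_natCast _ 2).symm
      _ = (ENNReal.ofReal |g x|) ^ (2:ℝ) := by norm_num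
  have hInt : ∫ x, g x ^ 2 ∂μ = L.toReal := by
    have hmeas : AEStronglyMeasurable (fun x => g x ^ 2) μ := by
      have := hg.1.fun_mul hg.1
      simpa [sq] using this
    rw [integral_eq_lintegral_of_nonneg_ae (Filter.Eventually.of_forall fun x => sq_nonneg (g x)) hmeas]
    congr 1
    exact lintegral_congr fun x => hptw x
  rw [hInt, hL, ← ENNReal.toReal_rpow,
    ← Real.rpow_natCast (L.toReal ^ (1/2:ℝ)) 2, ← Real.rpow_mul ENNReal.toReal_nonneg]
  norm_num


lemma prod_bound {V W : ℝ} (hV : 0 ≤ V) (hW : 0 ≤ W) {k E : ℕ} (hkE : k + 1 ≤ E) :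
    (V + W) * (V ^ k + W ^ k) ≤ 4 * (1 + V ^ E + W ^ E) := by
  set M := max V W with hM
  have hVM : V ≤ M := le_max_left _ _
  have hWM : W ≤ M := le_max_right _ _
  have hM0 : 0 ≤ M := le_trans hV hVM
  have h1 : (V + W) * (V ^ k + W ^ k) ≤ (2 * M) * (2 * M ^ k) := by
    have hVk : V ^ k ≤ M ^ k := pow_le_pow_left₀ hV hVM k
    have hWk : W ^ k ≤ M ^ k := pow_le_pow_left₀ hW hWM k
    apply mul_le_mul (by linarith) (by linarith) (by positivity) (by positivity)
  have h2 : M ^ (k + 1) ≤ 1 + M ^ E := by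
    rcases le_total M 1 with h | h
    · have hh := pow_le_one₀ hM0 h (n := k + 1)
      have := pow_nonneg hM0 E
      linarith
    · have hh := pow_le_pow_right₀ h hkE
      linarith
  have h3 : M ^ E ≤ V ^ E + W ^ E := by
    rcases max_cases V W with ⟨hMe, _⟩ | ⟨hMe, _⟩ <;> rw [hM, hMe]
    · linarith [pow_nonneg hW E]
    · linarith [pow_nonneg hV E]
  calc (V + W) * (V ^ k + W ^ k) ≤ (2 * M) * (2 * M ^ k) := h1
    _ = 4 * M ^ (k + 1) := by ring
    _ ≤ 4 * (1 + M ^ E) := by linarith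
    _ ≤ 4 * (1 + V ^ E + W ^ E) := by linarith

end aux

theorem stmt11
    (T : ℝ) (hT : 0 < T) (d : ℕ) (hd : 0 < d) (n : ℕ) (hn : Odd n)
    (a : ℕ → ℝ) (han : a n < 0) (b1 b2 : ℝ) (hb : b1 < b2)
    (v w : (Fin d → ℝ) → ℝ) (hvm : Measurable v) (hwm : Measurable w)
    (hv : eLpNorm v (ENNReal.ofReal (2 * (n : ℝ) ^ 2)) (volume.restrict (box d b1 b2)) < ⊤)
    (hw : eLpNorm w (ENNReal.ofReal (2 * (n : ℝ) ^ 2)) (volume.restrict (box d b1 b2)) < ⊤) :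
    Integrable (fun x => (v x - w x) * (Fpoly d n a v x - Fpoly d n a w x))
        (volume.restrict (box d b1 b2)) ∧
      (∫ x in box d b1 b2, (v x - w x) * (Fpoly d n a v x - Fpoly d n a w x)) ≤
        ((n : ℝ) - 1) * max 1 (|a n| ^ ((2 : ℝ) - n)) *
          max 1 ((Finset.range n).sup' (Finset.nonempty_range_iff.mpr hn.pos.ne')
            fun k => ((k : ℝ) * |a k|) ^ (n - 1)) *
          lpN d b1 b2 2 (fun x => v x - w x) ^ 2 := by
  have hn1 : 1 ≤ n := hn.pos
  set μ : Measure (Fin d → ℝ) := volume.restrict (box d b1 b2) with hμ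
  -- finite measure
  have hvol : volume (box d b1 b2) < ⊤ := by
    rw [box, volume_pi_pi]
    simp only [Real.volume_Ioo, Finset.prod_const, Finset.card_univ, Fintype.card_fin]
    exact ENNReal.pow_lt_top ENNReal.ofReal_lt_top
  haveI : Fact (volume (box d b1 b2) < ⊤) := ⟨hvol⟩
  haveI : IsFiniteMeasure μ := by rw [hμ]; infer_instance
  -- Lp membership
  set p : ENNReal := ENNReal.ofReal (2 * (n : ℝ) ^ 2) with hp
  set E : ℕ := 2 * n ^ 2 with hE
  have hp_eq : p = (E : ENNReal) := by
    rw [hp, hE, ← ENNReal.ofReal_natCast]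
    congr 1
    push_cast
    ring
  have hE_pos : 0 < E := by positivity
  have hvL : MemLp v p μ := ⟨hvm.aestronglyMeasurable, hv⟩
  have hwL : MemLp w p μ := ⟨hwm.aestronglyMeasurable, hw⟩
  have h2p : (2 : ENNReal) ≤ p := by
    rw [hp_eq]
    have h22 : ((2:ℕ) : ENNReal) ≤ (E : ENNReal) := by
      rw [Nat.cast_le, hE]
      nlinarith [hn1]
    simpa using h22
  have hv2 : MemLp v 2 μ := hvL.mono_exponent h2p
  have hw2 : MemLp w 2 μ := hwL.mono_exponent h2p
  have hvw2 : MemLp (fun x => v x - w x) 2 μ := hv2.sub hw2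
  -- constants
  set B : ℝ := max 1 ((Finset.range n).sup' (Finset.nonempty_range_iff.mpr hn.pos.ne')
      fun k => ((k : ℝ) * |a k|) ^ (n - 1)) with hBdef
  have hB : 1 ≤ B := le_max_left _ _
  have hbB : ∀ k, k < n → ((k:ℝ) * |a k|) ^ (n - 1) ≤ B := by
    intro k hk
    exact le_trans (Finset.le_sup' (f := fun k : ℕ => ((k : ℝ) * |a k|) ^ (n - 1))
      (Finset.mem_range.mpr hk)) (le_max_right _ _)
  set c : ℝ := ((n : ℝ) - 1) * (max 1 (|a n| ^ ((2 : ℝ) - n)) * B) with hc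
  -- pointwise inequality
  have hpt : ∀ x, (v x - w x) * (Fpoly d n a v x - Fpoly d n a w x) ≤
      c * (v x - w x) ^ 2 := by
    intro x
    have := pointwise_bound hn han hB hbB (v x) (w x)
    simpa [Fpoly, hc] using this
  -- measurability
  have hFv : Measurable (Fpoly d n a v) := by
    apply Finset.measurable_sum
    intro k _
    exact (hvm.pow_const k).const_mul (a k)
  have hFw : Measurable (Fpoly d n a w) := by
    apply Finset.measurable_sum
    intro k _
    exact (hwm.pow_const k).const_mul (a k)
  have hfm : Measurable (fun x => (v x - w x) * (Fpoly d n a v x - Fpoly d n a w x)) :=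
    (hvm.sub hwm).mul (hFv.sub hFw)
  -- integrability via domination
  have hp0 : p ≠ 0 := by
    rw [hp_eq]
    exact_mod_cast Nat.cast_ne_zero.mpr hE_pos.ne'
  have hptop : p ≠ ⊤ := by rw [hp]; exact ENNReal.ofReal_ne_top
  have hpto : p.toReal = (E : ℝ) := by
    rw [hp_eq]
    simp
  have hIv : Integrable (fun x => |v x| ^ E) μ := by
    have h := hvL.integrable_norm_rpow hp0 hptop
    have heq : (fun x => ‖v x‖ ^ p.toReal) = fun x => |v x| ^ E := by
      funext x
      rw [hpto, Real.rpow_natCast, Real.norm_eq_abs]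
    rwa [heq] at h
  have hIw : Integrable (fun x => |w x| ^ E) μ := by
    have h := hwL.integrable_norm_rpow hp0 hptop
    have heq : (fun x => ‖w x‖ ^ p.toReal) = fun x => |w x| ^ E := by
      funext x
      rw [hpto, Real.rpow_natCast, Real.norm_eq_abs]
    rwa [heq] at h
  set C : ℝ := ∑ k ∈ Finset.range (n + 1), |a k| with hC
  have hC0 : 0 ≤ C := Finset.sum_nonneg fun k _ => abs_nonneg _
  have hgint : Integrable (fun x => (C * 4) * (1 + |v x| ^ E + |w x| ^ E)) μ :=
    (((integrable_const (1:ℝ)).add hIv).add hIw).const_mul (C * 4)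
  have hbound : ∀ x, ‖(v x - w x) * (Fpoly d n a v x - Fpoly d n a w x)‖ ≤
      (C * 4) * (1 + |v x| ^ E + |w x| ^ E) := by
    intro x
    set V := |v x| with hV
    set W := |w x| with hW
    have hV0 : 0 ≤ V := abs_nonneg _
    have hW0 : 0 ≤ W := abs_nonneg _
    have hsplit : Fpoly d n a v x - Fpoly d n a w x =
        ∑ k ∈ Finset.range (n + 1), a k * (v x ^ k - w x ^ k) := by
      rw [Fpoly, Fpoly, ← Finset.sum_sub_distrib]
      congr 1
      funext k
      ring
    rw [norm_mul, hsplit, Real.norm_eq_abs, Real.norm_eq_abs]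
    have h1 : |v x - w x| ≤ V + W := (abs_sub _ _)
    have h2 : |∑ k ∈ Finset.range (n + 1), a k * (v x ^ k - w x ^ k)| ≤
        ∑ k ∈ Finset.range (n + 1), |a k| * (V ^ k + W ^ k) := by
      refine le_trans (Finset.abs_sum_le_sum_abs _ _) (Finset.sum_le_sum ?_)
      intro k _
      rw [abs_mul]
      apply mul_le_mul_of_nonneg_left _ (abs_nonneg (a k))
      calc |v x ^ k - w x ^ k| ≤ |v x ^ k| + |w x ^ k| := abs_sub _ _
        _ = V ^ k + W ^ k := by rw [abs_pow, abs_pow]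
    calc |v x - w x| * |∑ k ∈ Finset.range (n + 1), a k * (v x ^ k - w x ^ k)|
        ≤ (V + W) * (∑ k ∈ Finset.range (n + 1), |a k| * (V ^ k + W ^ k)) := by
          apply mul_le_mul h1 h2 (abs_nonneg _) (by linarith)
      _ = ∑ k ∈ Finset.range (n + 1), |a k| * ((V + W) * (V ^ k + W ^ k)) := by
          rw [Finset.mul_sum]
          congr 1
          funext k
          ring
      _ ≤ ∑ k ∈ Finset.range (n + 1), |a k| * (4 * (1 + V ^ E + W ^ E)) := by
          apply Finset.sum_le_sum
          intro k hk
          apply mul_le_mul_of_nonneg_left _ (abs_nonneg (a k))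
          apply prod_bound hV0 hW0
          rw [Finset.mem_range] at hk
          rw [hE]
          nlinarith [hn1, hk]
      _ = (C * 4) * (1 + V ^ E + W ^ E) := by
          rw [← Finset.sum_mul, ← hC]
          ring
  have hint1 : Integrable (fun x => (v x - w x) * (Fpoly d n a v x - Fpoly d n a w x)) μ :=
    hgint.mono' hfm.aestronglyMeasurable (Filter.Eventually.of_forall hbound)
  refine ⟨hint1, ?_⟩
  have hint2 : Integrable (fun x => c * (v x - w x) ^ 2) μ :=
    (hvw2.integrable_sq).const_mul c
  have hle := integral_mono hint1 hint2 hpt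
  rw [integral_const_mul] at hle
  have hsq := sq_integral_eq hvw2
  have hlpn : lpN d b1 b2 2 (fun x => v x - w x) =
      (eLpNorm (fun x => v x - w x) 2 μ).toReal := by
    rw [lpN, hμ]
    norm_num
  have hfinal : c * ∫ x, (v x - w x) ^ 2 ∂μ =
      ((n : ℝ) - 1) * max 1 (|a n| ^ ((2 : ℝ) - n)) * B *
        lpN d b1 b2 2 (fun x => v x - w x) ^ 2 := by
    rw [hsq, hlpn, hc]
    ring
  calc (∫ x, (v x - w x) * (Fpoly d n a v x - Fpoly d n a w x) ∂μ)
      ≤ c * ∫ x, (v x - w x) ^ 2 ∂μ := hle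
    _ = _ := hfinal
end
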